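/- arXiv:1307.4385 — 12 statements merged into one kernel-verified Lean document; each statement's English description precedes it below -/
import Mathlib

section
/- For an infinite-dimensional real Banach space X, the Whitley thickness constant T_W(X) = inf{ε > 0 : there is a finite ε-net F ⊆ S_X for S_X} equals T(X) = inf{ε > 0 : there exist finitely many points x_1,…,x_n ∈ S_X with B_X ⊆ ⋃_i B(x_i, ε)}. -/
/-- The thickness constant `T(X)`: the infimum of `ε > 0` such that finitely many closed
`ε`-balls centered at unit vectors cover the closed unit ball of `X`. -/
noncomputable def thickness (X : Type*) [NormedAddCommGroup X] : ℝ :=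
  sInf {ε : ℝ | 0 < ε ∧ ∃ F : Finset X, (∀ x ∈ F, ‖x‖ = 1) ∧
    ∀ y : X, ‖y‖ ≤ 1 → ∃ x ∈ F, ‖y - x‖ ≤ ε}

/-- Whitley's thickness constant `T_W(X)`: the infimum of `ε > 0` such that there is a finite
`ε`-net consisting of unit vectors for the unit sphere of `X`. -/
noncomputable def whitleyThickness (X : Type*) [NormedAddCommGroup X] : ℝ :=
  sInf {ε : ℝ | 0 < ε ∧ ∃ F : Finset X, (∀ x ∈ F, ‖x‖ = 1) ∧
    ∀ y : X, ‖y‖ = 1 → ∃ x ∈ F, ‖y - x‖ ≤ ε}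

/-- In an infinite-dimensional space, any `ε` admitting a finite `ε`-net of unit vectors for
the unit sphere satisfies `ε ≥ 1`. -/
lemma one_le_of_sphere_net {X : Type*} [NormedAddCommGroup X] [NormedSpace ℝ X]
    (hinf : ¬ FiniteDimensional ℝ X) {ε : ℝ} (hε : 0 < ε) (F : Finset X)
    (hF1 : ∀ x ∈ F, ‖x‖ = 1) (hnet : ∀ y : X, ‖y‖ = 1 → ∃ x ∈ F, ‖y - x‖ ≤ ε) :
    1 ≤ ε := by
  by_contra hlt
  push_neg at hlt
  set V : Submodule ℝ X := Submodule.span ℝ (F : Set X) with hV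
  have hVfd : FiniteDimensional ℝ V := by
    apply FiniteDimensional.span_of_finite
    exact F.finite_toSet
  have hVc : IsClosed (V : Set X) := Submodule.closed_of_finiteDimensional V
  have hVne : ∃ x : X, x ∉ V := by
    by_contra h
    push_neg at h
    have htop : V = ⊤ := by ext x; simp [h x]
    exact hinf (Module.Finite.equiv (LinearEquiv.ofTop V htop))
  set r : ℝ := (ε + 1) / 2 with hr
  have hrlt : r < 1 := by rw [hr]; linarith
  have hεr : ε < r := by rw [hr]; linarith
  obtain ⟨x₀, hx₀V, hx₀⟩ := riesz_lemma (𝕜 := ℝ) hVc hVne hrlt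
  have hx₀ne : x₀ ≠ 0 := fun h => hx₀V (h ▸ V.zero_mem)
  have hx₀pos : 0 < ‖x₀‖ := norm_pos_iff.mpr hx₀ne
  set z : X := ‖x₀‖⁻¹ • x₀ with hz
  have hznorm : ‖z‖ = 1 := by
    rw [hz, norm_smul, norm_inv, norm_norm, inv_mul_cancel₀ (ne_of_gt hx₀pos)]
  obtain ⟨x, hxF, hxz⟩ := hnet z hznorm
  have hxV : (‖x₀‖ • x) ∈ V := V.smul_mem _ (Submodule.subset_span hxF)
  have := hx₀ (‖x₀‖ • x) hxV
  have hkey : ‖x₀ - ‖x₀‖ • x‖ = ‖x₀‖ * ‖z - x‖ := by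
    have h2 : ‖x₀‖ • (z - x) = x₀ - ‖x₀‖ • x := by
      rw [hz, smul_sub, smul_smul, mul_inv_cancel₀ hx₀pos.ne', one_smul]
    rw [← h2, norm_smul, Real.norm_eq_abs, abs_of_pos hx₀pos]
  rw [hkey] at this
  have hrle : r ≤ ‖z - x‖ := le_of_mul_le_mul_left (by linarith [this]) hx₀pos
  linarith

theorem net_sets_eq (X : Type*) [NormedAddCommGroup X] [NormedSpace ℝ X]
    (hinf : ¬ FiniteDimensional ℝ X) :
    {ε : ℝ | 0 < ε ∧ ∃ F : Finset X, (∀ x ∈ F, ‖x‖ = 1) ∧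
      ∀ y : X, ‖y‖ = 1 → ∃ x ∈ F, ‖y - x‖ ≤ ε} =
    {ε : ℝ | 0 < ε ∧ ∃ F : Finset X, (∀ x ∈ F, ‖x‖ = 1) ∧
      ∀ y : X, ‖y‖ ≤ 1 → ∃ x ∈ F, ‖y - x‖ ≤ ε} := by
  have : Nontrivial X := by
    by_contra h
    have : Subsingleton X := not_nontrivial_iff_subsingleton.mp h
    exact hinf inferInstance
  ext ε
  constructor
  · rintro ⟨hε, F, hF1, hnet⟩
    have h1 : 1 ≤ ε := one_le_of_sphere_net hinf hε F hF1 hnet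
    refine ⟨hε, F, hF1, fun y hy => ?_⟩
    rcases eq_or_ne y 0 with rfl | hy0
    · obtain ⟨u, hu⟩ := exists_norm_eq X zero_le_one
      obtain ⟨x, hxF, _⟩ := hnet u hu
      exact ⟨x, hxF, by rw [zero_sub, norm_neg, hF1 x hxF]; exact h1⟩
    · set z : X := ‖y‖⁻¹ • y with hz
      have hypos : 0 < ‖y‖ := norm_pos_iff.mpr hy0
      have hznorm : ‖z‖ = 1 := by
        rw [hz, norm_smul, norm_inv, norm_norm, inv_mul_cancel₀ (ne_of_gt hypos)]
      obtain ⟨x, hxF, hzx⟩ := hnet z hznorm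
      refine ⟨x, hxF, ?_⟩
      have hy' : y - x = ‖y‖ • (z - x) + (1 - ‖y‖) • (-x) := by
        rw [hz]
        match_scalars <;> field_simp <;> ring
      calc ‖y - x‖ ≤ ‖y‖ * ‖z - x‖ + (1 - ‖y‖) * ‖x‖ := by
            rw [hy']
            refine (norm_add_le _ _).trans ?_
            rw [norm_smul, norm_smul, norm_neg, Real.norm_eq_abs, Real.norm_eq_abs,
              abs_of_nonneg (norm_nonneg y), abs_of_nonneg (by linarith)]
        _ ≤ ‖y‖ * ε + (1 - ‖y‖) * 1 := by
            gcongr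
            · rw [hF1 x hxF]
        _ ≤ ‖y‖ * ε + (1 - ‖y‖) * ε := by
            gcongr
        _ = ε := by ring
  · rintro ⟨hε, F, hF1, hnet⟩
    exact ⟨hε, F, hF1, fun y hy => hnet y (le_of_eq hy)⟩

/-- for an infinite-dimensional real Banach space, `T_W(X) = T(X)`. -/
theorem whitleyThickness_eq_thickness
    (X : Type*) [NormedAddCommGroup X] [NormedSpace ℝ X] [CompleteSpace X]
    (hinf : ¬ FiniteDimensional ℝ X) :
    whitleyThickness X = thickness X := by
  unfold whitleyThickness thickness
  rw [net_sets_eq X hinf]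
end

section
/- For 1 ≤ p < ∞, the thickness constant of L_p[0,1] equals 2^{1/p}; that is, T(L_p[0,1]) = 2^{1/p} where T(X) = inf{ε > 0 : finitely many closed balls of radius ε centered at unit vectors cover the unit ball}. -/
set_option linter.unusedSectionVars false

open scoped ENNReal NNReal

open MeasureTheory

open scoped ENNReal NNReal
open MeasureTheory

namespace ThLp

noncomputable def μ0 : Measure ℝ := volume.restrict (Set.Icc 0 1)

lemma μ0_univ : μ0 Set.univ = 1 := by
  simp [μ0, Measure.restrict_apply MeasurableSet.univ]

/-- the `i`-th of `n` subintervals -/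
def I (n i : ℕ) : Set ℝ := Set.Ico ((i:ℝ)/n) (((i:ℝ)+1)/n)

lemma I_subset (n i : ℕ) (hi : i < n) : I n i ⊆ Set.Icc 0 1 := by
  have hn : (0:ℝ) < n := by exact_mod_cast (Nat.pos_of_ne_zero (by omega))
  intro x hx
  rcases hx with ⟨h1, h2⟩
  constructor
  · exact le_trans (by positivity) h1
  · refine le_of_lt (lt_of_lt_of_le h2 ?_)
    rw [div_le_one hn]
    exact_mod_cast Nat.succ_le_of_lt hi

lemma μ0_I (n i : ℕ) (hn : 0 < n) (hi : i < n) : μ0 (I n i) = 1 / n := by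
  have hn' : (0:ℝ) < n := by exact_mod_cast hn
  rw [μ0, Measure.restrict_apply' measurableSet_Icc,
    Set.inter_eq_self_of_subset_left (I_subset n i hi), I, Real.volume_Ico]
  have : ((i:ℝ) + 1) / n - (i:ℝ)/n = 1 / n := by ring
  rw [this, ENNReal.ofReal_div_of_pos hn', ENNReal.ofReal_one, ENNReal.ofReal_natCast]

lemma I_disj_aux (n i j : ℕ) (h : i < j) : Disjoint (I n i) (I n j) := by
  refine Set.Ico_disjoint_Ico.mpr ?_
  have hn : (0:ℝ) ≤ n := by positivity
  rcases eq_or_lt_of_le hn with h0 | h0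
  · simp [I, ← h0]
  refine le_trans (min_le_left _ _) (le_trans ?_ (le_max_right _ _))
  gcongr
  exact_mod_cast Nat.succ_le_of_lt h

lemma measurableSet_I {n i : ℕ} : MeasurableSet (I n i) := measurableSet_Ico

lemma I_disj (n : ℕ) : Set.PairwiseDisjoint (↑(Finset.range n)) (I n) := by
  intro i _ j _ hij
  rcases lt_or_gt_of_ne hij with h | h
  · exact I_disj_aux n i j h
  · exact (I_disj_aux n j i h).symm

section P
variable (p : ℝ≥0∞) [Fact (1 ≤ p)]

local notation "q" => ENNReal.toReal p

lemma p_ne_zero : p ≠ 0 := by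
  have : (1:ℝ≥0∞) ≤ p := Fact.out
  intro h; rw [h] at this; simp at this

lemma one_le_q (hp : p ≠ ⊤) : 1 ≤ q := by
  have : (1:ℝ≥0∞) ≤ p := Fact.out
  have := ENNReal.toReal_mono hp this
  simpa using this

lemma q_pos (hp : p ≠ ⊤) : 0 < q := lt_of_lt_of_le one_pos (one_le_q p hp)
lemma q_ne (hp : p ≠ ⊤) : q ≠ 0 := ne_of_gt (q_pos p hp)

/-- the `p`-energy of `f` on `A` -/
noncomputable def NN (f : ℝ → ℝ) (A : Set ℝ) : ℝ≥0∞ :=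
  ∫⁻ a in A, (‖f a‖₊ : ℝ≥0∞) ^ q ∂μ0

lemma eLpNorm_restrict (hp : p ≠ ⊤) (f : ℝ → ℝ) (A : Set ℝ) :
    eLpNorm f p (μ0.restrict A) = NN p f A ^ (1/q) := by
  exact eLpNorm_eq_lintegral_rpow_enorm_toReal (p_ne_zero p) hp

lemma NN_eq_rpow (hp : p ≠ ⊤) (f : ℝ → ℝ) (A : Set ℝ) :
    NN p f A = eLpNorm f p (μ0.restrict A) ^ q := by
  rw [eLpNorm_restrict p hp _ _, ← ENNReal.rpow_mul, one_div,
    inv_mul_cancel₀ (q_ne p hp), ENNReal.rpow_one]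

lemma NN_univ (hp : p ≠ ⊤) (f : Lp ℝ p μ0) :
    NN p (⇑f) Set.univ = ENNReal.ofReal ‖f‖ ^ q := by
  rw [NN_eq_rpow p hp, Measure.restrict_univ, Lp.norm_def,
    ENNReal.ofReal_toReal (Lp.eLpNorm_ne_top f)]

lemma NN_add_compl (f : ℝ → ℝ) {A : Set ℝ} (hA : MeasurableSet A) :
    NN p f A + NN p f Aᶜ = NN p f Set.univ := by
  rw [NN, NN, NN, lintegral_add_compl _ hA, Measure.restrict_univ]

lemma NN_le_univ (f : ℝ → ℝ) (A : Set ℝ) :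
    NN p f A ≤ NN p f Set.univ := by
  rw [NN, NN, Measure.restrict_univ]
  exact lintegral_mono' Measure.restrict_le_self le_rfl

lemma μ0_I_ne_top (n i : ℕ) : μ0 (I n i) ≠ ∞ :=
  ne_top_of_le_ne_top (by rw [μ0_univ]; exact ENNReal.one_ne_top) (measure_mono (Set.subset_univ _))

/-- the normalized indicator of `I n i` as an element of `Lp`. -/
noncomputable def xI (n i : ℕ) : Lp ℝ p μ0 :=
  indicatorConstLp p measurableSet_I (μ0_I_ne_top n i) ((n:ℝ) ^ (1/q))

lemma coe_xI (n i : ℕ) :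
    ⇑(xI p n i) =ᵐ[μ0] (I n i).indicator (fun _ => (n:ℝ) ^ (1/q)) :=
  indicatorConstLp_coeFn

lemma norm_xI (hp : p ≠ ⊤) (n i : ℕ) (hn : 0 < n) (hi : i < n) : ‖xI p n i‖ = 1 := by
  have hn' : (0:ℝ) < n := by exact_mod_cast hn
  rw [xI, norm_indicatorConstLp (p_ne_zero p) hp,
    measureReal_def, μ0_I n i hn hi]
  rw [Real.norm_rpow_of_nonneg hn'.le, Real.norm_natCast]
  rw [ENNReal.toReal_div, ENNReal.toReal_one, ENNReal.toReal_natCast]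
  rw [← Real.mul_rpow hn'.le (by positivity), mul_one_div_cancel (ne_of_gt hn'),
    Real.one_rpow]

lemma exists_small (n : ℕ) (hn : 0 < n) (g : ℝ → ℝ≥0∞) (C : ℝ≥0∞)
    (hC : ∫⁻ a, g a ∂μ0 ≤ C) :
    ∃ i < n, ∫⁻ a in I n i, g a ∂μ0 ≤ C / n := by
  obtain ⟨i, hi, hmin⟩ := Finset.exists_min_image (Finset.range n)
    (fun i => ∫⁻ a in I n i, g a ∂μ0) ⟨0, Finset.mem_range.mpr hn⟩
  refine ⟨i, Finset.mem_range.mp hi, ?_⟩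
  have hsum : ∑ j ∈ Finset.range n, ∫⁻ a in I n j, g a ∂μ0 ≤ C := by
    rw [← lintegral_biUnion_finset (I_disj n) (fun i _ => measurableSet_I) g]
    exact le_trans (lintegral_mono' (Measure.restrict_le_self) le_rfl) hC
  have hn0 : (n : ℝ≥0∞) ≠ 0 := by exact_mod_cast hn.ne'
  rw [ENNReal.le_div_iff_mul_le (Or.inl hn0) (Or.inl (ENNReal.natCast_ne_top n))]
  calc (∫⁻ a in I n i, g a ∂μ0) * n
      = ∑ _j ∈ Finset.range n, ∫⁻ a in I n i, g a ∂μ0 := by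
        rw [Finset.sum_const, Finset.card_range, nsmul_eq_mul, mul_comm]
    _ ≤ ∑ j ∈ Finset.range n, ∫⁻ a in I n j, g a ∂μ0 :=
        Finset.sum_le_sum (fun j hj => hmin j hj)
    _ ≤ C := hsum

lemma eLpNorm_coe_Lp (f : Lp ℝ p μ0) : eLpNorm (⇑f) p μ0 = ENNReal.ofReal ‖f‖ := by
  rw [Lp.norm_def, ENNReal.ofReal_toReal (Lp.eLpNorm_ne_top f)]

lemma ofReal_norm_NN (hp : p ≠ ⊤) (f : Lp ℝ p μ0) :
    ENNReal.ofReal ‖f‖ = NN p (⇑f) Set.univ ^ (1/q) := by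
  rw [NN_univ p hp f, ← ENNReal.rpow_mul, mul_one_div_cancel (q_ne p hp), ENNReal.rpow_one]

lemma NN_sub_xI_compl (hp : p ≠ ⊤) (n i : ℕ) (y : Lp ℝ p μ0) :
    NN p (⇑(y - xI p n i)) (I n i)ᶜ = NN p (⇑y) (I n i)ᶜ := by
  refine lintegral_congr_ae ?_
  filter_upwards [ae_restrict_of_ae (Lp.coeFn_sub y (xI p n i)),
    ae_restrict_of_ae (coe_xI p n i),
    self_mem_ae_restrict measurableSet_I.compl]
    with a ha1 ha2 ha
  rw [ha1, Pi.sub_apply, ha2, Set.indicator_of_notMem (by simpa using ha), sub_zero]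

lemma NN_sub_xI_compl' (hp : p ≠ ⊤) (n i : ℕ) (x : Lp ℝ p μ0) :
    NN p (⇑(xI p n i - x)) (I n i)ᶜ = NN p (⇑x) (I n i)ᶜ := by
  refine lintegral_congr_ae ?_
  filter_upwards [ae_restrict_of_ae (Lp.coeFn_sub (xI p n i) x),
    ae_restrict_of_ae (coe_xI p n i),
    self_mem_ae_restrict measurableSet_I.compl]
    with a ha1 ha2 ha
  rw [ha1, Pi.sub_apply, ha2, Set.indicator_of_notMem (by simpa using ha), zero_sub,
    nnnorm_neg]

lemma NN_xI_compl (hp : p ≠ ⊤) (n i : ℕ) :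
    NN p (⇑(xI p n i)) (I n i)ᶜ = 0 := by
  rw [NN, ← lintegral_zero (μ := μ0.restrict (I n i)ᶜ)]
  refine lintegral_congr_ae ?_
  filter_upwards [ae_restrict_of_ae (coe_xI p n i),
    self_mem_ae_restrict measurableSet_I.compl]
    with a ha2 ha
  rw [ha2, Set.indicator_of_notMem (by simpa using ha)]
  simp [ENNReal.zero_rpow_of_pos (q_pos p hp)]

lemma NN_xI_I (hp : p ≠ ⊤) (n i : ℕ) (hn : 0 < n) (hi : i < n) :
    NN p (⇑(xI p n i)) (I n i) = 1 := by
  have h := NN_add_compl p (⇑(xI p n i)) (measurableSet_I (n := n) (i := i))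
  rw [NN_xI_compl p hp n i, add_zero, NN_univ p hp, norm_xI p hp n i hn hi] at h
  rw [h]; simp

lemma eLpNorm_xI_restrict_le (hp : p ≠ ⊤) (n i : ℕ) (hn : 0 < n) (hi : i < n)
    (A : Set ℝ) : eLpNorm (⇑(xI p n i)) p (μ0.restrict A) ≤ 1 := by
  refine le_trans (eLpNorm_mono_measure _ Measure.restrict_le_self) ?_
  rw [eLpNorm_coe_Lp, norm_xI p hp n i hn hi, ENNReal.ofReal_one]

/-- The key upper bound estimate. -/
lemma upper_main (hp : p ≠ ⊤) (n : ℕ) (hn : 0 < n) (y : Lp ℝ p μ0) (hy : ‖y‖ ≤ 1) :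
    ∃ i < n, ENNReal.ofReal ‖y - xI p n i‖ ≤
      (((1/(n:ℝ≥0∞)) ^ (1/q) + 1) ^ q + 1) ^ (1/q) := by
  have hyN : NN p (⇑y) Set.univ ≤ 1 := by
    rw [NN_univ p hp y]
    exact ENNReal.rpow_le_one (ENNReal.ofReal_le_one.mpr hy) (q_pos p hp).le
  rw [NN, Measure.restrict_univ] at hyN
  obtain ⟨i, hi, hsmall⟩ := exists_small n hn _ 1 hyN
  refine ⟨i, hi, ?_⟩
  rw [ofReal_norm_NN p hp]
  refine ENNReal.rpow_le_rpow ?_ (by positivity)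
  rw [← NN_add_compl p (⇑(y - xI p n i)) (measurableSet_I (n := n) (i := i))]
  refine add_le_add ?_ ?_
  · -- on I n i
    rw [NN_eq_rpow p hp]
    refine ENNReal.rpow_le_rpow ?_ (q_pos p hp).le
    have hcong : eLpNorm (⇑(y - xI p n i)) p (μ0.restrict (I n i)) =
        eLpNorm (⇑y - ⇑(xI p n i)) p (μ0.restrict (I n i)) :=
      eLpNorm_congr_ae (ae_restrict_of_ae (Lp.coeFn_sub y (xI p n i)))
    rw [hcong]
    refine le_trans (eLpNorm_sub_le ((Lp.aestronglyMeasurable y).restrict)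
      ((Lp.aestronglyMeasurable (xI p n i)).restrict) Fact.out) ?_
    refine add_le_add ?_ (eLpNorm_xI_restrict_le p hp n i hn hi _)
    rw [eLpNorm_restrict p hp]
    refine ENNReal.rpow_le_rpow ?_ (by positivity)
    simpa [NN, one_div] using hsmall
  · -- off I n i
    rw [NN_sub_xI_compl p hp n i y]
    refine le_trans (NN_le_univ p _ _) ?_
    rw [NN, Measure.restrict_univ]
    exact hyN

/-- The key lower bound estimate. -/
lemma lower_main (hp : p ≠ ⊤) (ε : ℝ) (F : Finset (Lp ℝ p μ0))
    (hF1 : ∀ x ∈ F, ‖x‖ = 1)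
    (hcov : ∀ y : Lp ℝ p μ0, ‖y‖ ≤ 1 → ∃ x ∈ F, ‖y - x‖ ≤ ε)
    (n : ℕ) (hn : 0 < n) :
    ((1 - ((F.card : ℝ≥0∞)/n) ^ (1/q)) ^ q + (1 - (F.card : ℝ≥0∞)/n)) ^ (1/q)
      ≤ ENNReal.ofReal ε := by
  set δ : ℝ≥0∞ := (F.card : ℝ≥0∞)/n with hδ
  -- pigeonhole: find an interval where all members of F have small energy
  have htot : ∫⁻ a, (∑ x ∈ F, ((‖x a‖₊ : ℝ≥0∞)) ^ q) ∂μ0 ≤ (F.card : ℝ≥0∞) := by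
    rw [lintegral_finset_sum' _ (fun x _ =>
      ((Lp.aestronglyMeasurable x).aemeasurable.nnnorm.coe_nnreal_ennreal).pow_const q)]
    calc ∑ x ∈ F, ∫⁻ a, ((‖x a‖₊ : ℝ≥0∞)) ^ q ∂μ0
        = ∑ x ∈ F, NN p (⇑x) Set.univ := by
          refine Finset.sum_congr rfl (fun x _ => ?_); rw [NN, Measure.restrict_univ]
      _ ≤ ∑ _x ∈ F, 1 := Finset.sum_le_sum (fun x hx => by
          rw [NN_univ p hp x, hF1 x hx, ENNReal.ofReal_one, ENNReal.one_rpow])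
      _ = (F.card : ℝ≥0∞) := by simp
  obtain ⟨i, hi, hsmall⟩ := exists_small n hn _ _ htot
  have hxsmall : ∀ x ∈ F, NN p (⇑x) (I n i) ≤ δ := by
    intro x hx
    refine le_trans ?_ hsmall
    show (∫⁻ a in I n i, ((‖x a‖₊ : ℝ≥0∞)) ^ q ∂μ0) ≤ _
    calc ∫⁻ a in I n i, ((‖x a‖₊ : ℝ≥0∞)) ^ q ∂μ0
        ≤ ∫⁻ a in I n i, (∑ z ∈ F, ((‖z a‖₊ : ℝ≥0∞)) ^ q) ∂μ0 :=
          lintegral_mono (fun a => Finset.single_le_sum (f := fun z => ((‖z a‖₊ : ℝ≥0∞)) ^ q)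
            (fun _ _ => zero_le) hx)
      _ ≤ _ := le_rfl
  -- the test vector
  obtain ⟨x, hxF, hxε⟩ := hcov (xI p n i) (le_of_eq (norm_xI p hp n i hn hi))
  have key : ((1 - δ ^ (1/q)) ^ q + (1 - δ)) ≤ NN p (⇑(xI p n i - x)) Set.univ := by
    rw [← NN_add_compl p (⇑(xI p n i - x)) (measurableSet_I (n := n) (i := i))]
    refine add_le_add ?_ ?_
    · -- on I n i
      rw [NN_eq_rpow p hp]
      refine ENNReal.rpow_le_rpow ?_ (q_pos p hp).le
      have hcong : eLpNorm (⇑(xI p n i - x)) p (μ0.restrict (I n i)) =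
          eLpNorm (⇑(xI p n i) - ⇑x) p (μ0.restrict (I n i)) :=
        eLpNorm_congr_ae (ae_restrict_of_ae (Lp.coeFn_sub (xI p n i) x))
      rw [hcong, tsub_le_iff_right]
      have h1 : eLpNorm (⇑(xI p n i)) p (μ0.restrict (I n i)) = 1 := by
        rw [eLpNorm_restrict p hp, NN_xI_I p hp n i hn hi, ENNReal.one_rpow]
      calc (1 : ℝ≥0∞) = eLpNorm (⇑(xI p n i)) p (μ0.restrict (I n i)) := h1.symm
        _ = eLpNorm ((⇑(xI p n i) - ⇑x) + ⇑x) p (μ0.restrict (I n i)) := by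
            congr 1; ext a; simp
        _ ≤ eLpNorm (⇑(xI p n i) - ⇑x) p (μ0.restrict (I n i)) +
            eLpNorm (⇑x) p (μ0.restrict (I n i)) := by
            refine eLpNorm_add_le ?_ ((Lp.aestronglyMeasurable x).restrict) Fact.out
            exact ((Lp.aestronglyMeasurable (xI p n i)).restrict).sub
              ((Lp.aestronglyMeasurable x).restrict)
        _ ≤ eLpNorm (⇑(xI p n i) - ⇑x) p (μ0.restrict (I n i)) + δ ^ (1/q) := by
            refine add_le_add le_rfl ?_
            rw [eLpNorm_restrict p hp]
            exact ENNReal.rpow_le_rpow (hxsmall x hxF) (by positivity)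
    · -- off I n i
      rw [NN_sub_xI_compl' p hp n i x]
      have h := NN_add_compl p (⇑x) (measurableSet_I (n := n) (i := i))
      rw [NN_univ p hp x, hF1 x hxF, ENNReal.ofReal_one, ENNReal.one_rpow] at h
      have h2 : (1:ℝ≥0∞) - δ ≤ 1 - NN p (⇑x) (I n i) :=
        tsub_le_tsub_left (hxsmall x hxF) 1
      refine le_trans h2 ?_
      exact tsub_le_iff_left.mpr (le_of_eq h.symm)
  calc ((1 - δ ^ (1/q)) ^ q + (1 - δ)) ^ (1/q)
      ≤ NN p (⇑(xI p n i - x)) Set.univ ^ (1/q) :=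
        ENNReal.rpow_le_rpow key (by positivity)
    _ = ENNReal.ofReal ‖xI p n i - x‖ := (ofReal_norm_NN p hp _).symm
    _ ≤ ENNReal.ofReal ε := ENNReal.ofReal_le_ofReal hxε

lemma B_eq (hp : p ≠ ⊤) (n : ℕ) (hn : 0 < n) :
    (((1/(n:ℝ≥0∞)) ^ (1/q) + 1) ^ q + 1) ^ (1/q)
      = ENNReal.ofReal ((((1/(n:ℝ)) ^ (1/q) + 1) ^ q + 1) ^ (1/q)) := by
  have hn' : (0:ℝ) < n := by exact_mod_cast hn
  have h1 : (1/(n:ℝ≥0∞)) = ENNReal.ofReal (1/(n:ℝ)) := by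
    rw [ENNReal.ofReal_div_of_pos hn', ENNReal.ofReal_one, ENNReal.ofReal_natCast]
  rw [h1, ENNReal.ofReal_rpow_of_nonneg (by positivity) (by positivity),
    ← ENNReal.ofReal_one, ← ENNReal.ofReal_add (by positivity) (by positivity),
    ENNReal.ofReal_rpow_of_nonneg (by positivity) (q_pos p hp).le,
    ← ENNReal.ofReal_add (by positivity) (by positivity),
    ENNReal.ofReal_rpow_of_nonneg (by positivity) (by positivity)]

lemma L_eq (hp : p ≠ ⊤) (c n : ℕ) (hn : 0 < n) (hcn : c ≤ n) :
    ((1 - ((c:ℝ≥0∞)/n) ^ (1/q)) ^ q + (1 - (c:ℝ≥0∞)/n)) ^ (1/q)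
      = ENNReal.ofReal (((1 - ((c:ℝ)/n) ^ (1/q)) ^ q + (1 - (c:ℝ)/n)) ^ (1/q)) := by
  have hn' : (0:ℝ) < n := by exact_mod_cast hn
  have hd0 : (0:ℝ) ≤ (c:ℝ)/n := by positivity
  have hd1 : ((c:ℝ)/n) ≤ 1 := by
    rw [div_le_one hn']; exact_mod_cast hcn
  have hr1 : ((c:ℝ)/n) ^ (1/q) ≤ 1 :=
    Real.rpow_le_one hd0 hd1 (by positivity)
  have h1 : ((c:ℝ≥0∞)/n) = ENNReal.ofReal ((c:ℝ)/n) := by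
    rw [ENNReal.ofReal_div_of_pos hn', ENNReal.ofReal_natCast, ENNReal.ofReal_natCast]
  have hsub1 : (0:ℝ) ≤ 1 - ((c:ℝ)/n) ^ (1/q) := by linarith
  have hsub2 : (0:ℝ) ≤ 1 - (c:ℝ)/n := by linarith
  rw [h1, ENNReal.ofReal_rpow_of_nonneg hd0 (by positivity),
    ← ENNReal.ofReal_one, ← ENNReal.ofReal_sub 1 (by positivity : (0:ℝ) ≤ ((c:ℝ)/n) ^ (1/q)),
    ENNReal.ofReal_rpow_of_nonneg hsub1 (q_pos p hp).le,
    ← ENNReal.ofReal_sub 1 hd0,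
    ← ENNReal.ofReal_add (by positivity) hsub2,
    ENNReal.ofReal_rpow_of_nonneg (by positivity) (by positivity)]

open Filter Topology in
lemma tendsto_upper (hp : p ≠ ⊤) :
    Tendsto (fun n : ℕ => (((1/((n:ℝ)+1)) ^ (1/q) + 1) ^ q + 1) ^ (1/q)) atTop
      (𝓝 ((2:ℝ) ^ (1/q))) := by
  have hq0 : (0:ℝ) < q := q_pos p hp
  have h0 : Tendsto (fun n : ℕ => 1/((n:ℝ)+1)) atTop (𝓝 0) :=
    tendsto_one_div_add_atTop_nhds_zero_nat
  have h1 := ((h0.rpow_const (Or.inr (by positivity : (0:ℝ) ≤ 1/q))).add_const 1)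
  have h2 := (h1.rpow_const (Or.inr hq0.le)).add_const 1
  have h3 := h2.rpow_const (Or.inr (by positivity : (0:ℝ) ≤ 1/q))
  have e : ((0:ℝ) ^ (1/q) + 1) ^ q + 1 = 2 := by
    rw [Real.zero_rpow (by positivity : (1/q : ℝ) ≠ 0), zero_add, Real.one_rpow]; norm_num
  rwa [e] at h3

open Filter Topology in
lemma tendsto_lower (hp : p ≠ ⊤) (c : ℝ) :
    Tendsto (fun n : ℕ => ((1 - (c/((n:ℝ)+1)) ^ (1/q)) ^ q + (1 - c/((n:ℝ)+1))) ^ (1/q))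
      atTop (𝓝 ((2:ℝ) ^ (1/q))) := by
  have hq0 : (0:ℝ) < q := q_pos p hp
  have h0 : Tendsto (fun n : ℕ => c/((n:ℝ)+1)) atTop (𝓝 0) := by
    have := tendsto_one_div_add_atTop_nhds_zero_nat.const_mul c
    simpa [mul_one_div, div_eq_mul_inv] using this
  have h1 := ((h0.rpow_const (Or.inr (by positivity : (0:ℝ) ≤ 1/q))).const_sub 1)
  have h2 := (h1.rpow_const (Or.inr hq0.le)).add (h0.const_sub 1)
  have h3 := h2.rpow_const (Or.inr (by positivity : (0:ℝ) ≤ 1/q))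
  have e : ((1 - (0:ℝ) ^ (1/q)) ^ q + (1 - 0)) ^ (1/q) = 2 ^ (1/q) := by
    rw [Real.zero_rpow (by positivity : (1/q : ℝ) ≠ 0), sub_zero, Real.one_rpow]; norm_num
  rwa [e] at h3

open scoped Classical in
/-- membership of the upper-bound radius in the defining set of `thickness`. -/
lemma mem_S (hp : p ≠ ⊤) (n : ℕ) (hn : 0 < n) :
    (0 < (((1/(n:ℝ)) ^ (1/q) + 1) ^ q + 1) ^ (1/q) ∧
      ∃ F : Finset (Lp ℝ p μ0), (∀ x ∈ F, ‖x‖ = 1) ∧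
        ∀ y : Lp ℝ p μ0, ‖y‖ ≤ 1 →
          ∃ x ∈ F, ‖y - x‖ ≤ (((1/(n:ℝ)) ^ (1/q) + 1) ^ q + 1) ^ (1/q)) := by
  have hn' : (0:ℝ) < n := by exact_mod_cast hn
  have hq0 : (0:ℝ) < q := q_pos p hp
  refine ⟨by positivity, (Finset.range n).image (fun i => xI p n i), ?_, ?_⟩
  · intro x hx
    obtain ⟨i, hi, rfl⟩ := Finset.mem_image.mp hx
    exact norm_xI p hp n i hn (Finset.mem_range.mp hi)
  · intro y hy
    obtain ⟨i, hi, hle⟩ := upper_main p hp n hn y hy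
    refine ⟨xI p n i, Finset.mem_image.mpr ⟨i, Finset.mem_range.mpr hi, rfl⟩, ?_⟩
    rw [B_eq p hp n hn] at hle
    exact (ENNReal.ofReal_le_ofReal_iff (by positivity)).mp hle

end P

end ThLp

open Filter Topology in
/-- `T(L_p[0,1]) = 2^{1/p}` for `1 ≤ p < ∞`. -/
theorem thickness_Lp_unitInterval
    (p : ℝ≥0∞) [Fact (1 ≤ p)] (hp : p ≠ ⊤) :
    thickness (Lp ℝ p (volume.restrict (Set.Icc (0:ℝ) 1))) = 2 ^ (1 / p.toReal) := by
  classical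
  have hq0 : (0:ℝ) < p.toReal := ThLp.q_pos p hp
  set q : ℝ := p.toReal with hq
  set S : Set ℝ := {ε : ℝ | 0 < ε ∧ ∃ F : Finset (Lp ℝ p ThLp.μ0), (∀ x ∈ F, ‖x‖ = 1) ∧
    ∀ y : Lp ℝ p ThLp.μ0, ‖y‖ ≤ 1 → ∃ x ∈ F, ‖y - x‖ ≤ ε} with hS
  have hth : thickness (Lp ℝ p (volume.restrict (Set.Icc (0:ℝ) 1))) = sInf S := rfl
  rw [hth]
  have hbdd : BddBelow S := ⟨0, fun ε hε => hε.1.le⟩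
  have hne : S.Nonempty := ⟨_, ThLp.mem_S p hp 1 one_pos⟩
  refine le_antisymm ?_ ?_
  · -- upper bound
    have htendU : Tendsto
        (fun n : ℕ => (((1/(((n+1:ℕ)):ℝ)) ^ (1/q) + 1) ^ q + 1) ^ (1/q)) atTop
        (𝓝 ((2:ℝ) ^ (1/q))) := by
      refine (ThLp.tendsto_upper p hp).congr (fun n => ?_)
      push_cast
      ring_nf
      rfl
    refine ge_of_tendsto' htendU (fun n => ?_)
    exact csInf_le hbdd (ThLp.mem_S p hp (n+1) n.succ_pos)
  · -- lower bound
    refine le_csInf hne ?_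
    rintro ε ⟨hε, F, hF1, hcov⟩
    set c : ℕ := F.card with hc
    have htendL : Tendsto
        (fun n : ℕ => ((1 - ((c:ℝ)/(((n+1:ℕ)):ℝ)) ^ (1/q)) ^ q +
            (1 - (c:ℝ)/(((n+1:ℕ)):ℝ))) ^ (1/q)) atTop
        (𝓝 ((2:ℝ) ^ (1/q))) := by
      refine (ThLp.tendsto_lower p hp (c:ℝ)).congr (fun n => ?_)
      push_cast
      ring_nf
      rfl
    refine le_of_tendsto htendL ?_
    filter_upwards [eventually_ge_atTop c] with n hn
    have h := ThLp.lower_main p hp ε F hF1 hcov (n+1) n.succ_pos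
    rw [ThLp.L_eq p hp c (n+1) n.succ_pos (by omega)] at h
    exact (ENNReal.ofReal_le_ofReal_iff hε.le).mp h
end

section
/- For 1 ≤ p < ∞ and any finite family f_1,…,f_n of norm-one functions in L_p[0,1] and any ε ∈ (0,1), there exists f ∈ S_{L_p[0,1]} with ‖f − f_i‖^p > 1 − ε^p + (1−ε)^p for every i. Consequently T(L_p[0,1]) ≥ 2^{1/p}. -/
open scoped ENNReal NNReal

open MeasureTheory

lemma lintegral_norm_rpow_eq {α : Type*} {m : MeasurableSpace α} {μ : Measure α}
    (p : ℝ≥0∞) [Fact (1 ≤ p)] (hp : p ≠ ⊤) (h : Lp ℝ p μ) :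
    ∫⁻ x, (‖h x‖₊ : ℝ≥0∞) ^ p.toReal ∂μ = ENNReal.ofReal (‖h‖ ^ p.toReal) := by
  have hp0 : p ≠ 0 := by
    have := Fact.out (p := 1 ≤ p); intro h0; simp [h0] at this
  have hq0 : 0 < p.toReal := ENNReal.toReal_pos hp0 hp
  set I := ∫⁻ x, (‖h x‖₊ : ℝ≥0∞) ^ p.toReal ∂μ with hI
  have hsnorm : eLpNorm (⇑h) p μ = I ^ (1 / p.toReal) := by
    simp only [eLpNorm_eq_lintegral_rpow_enorm_toReal hp0 hp, enorm_eq_nnnorm, hI]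
  have hne : eLpNorm (⇑h) p μ ≠ ⊤ := Lp.eLpNorm_ne_top h
  have hIne : I ≠ ⊤ := by
    intro htop
    rw [hsnorm, htop] at hne
    exact hne (ENNReal.top_rpow_of_pos (by positivity))
  rw [Lp.norm_def, hsnorm, ENNReal.toReal_rpow, ← ENNReal.rpow_mul,
    one_div_mul_cancel hq0.ne', ENNReal.rpow_one, ENNReal.ofReal_toReal hIne]


lemma key_lemma (p : ℝ≥0∞) [Fact (1 ≤ p)] (hp : p ≠ ⊤)
    (n : ℕ) (f : Fin n → Lp ℝ p (volume.restrict (Set.Icc (0:ℝ) 1)))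
    (hf : ∀ i, ‖f i‖ = 1) (ε : ℝ) (hε : ε ∈ Set.Ioo (0:ℝ) 1) :
    ∃ g : Lp ℝ p (volume.restrict (Set.Icc (0:ℝ) 1)), ‖g‖ = 1 ∧
      ∀ i, 1 - ε ^ p.toReal + (1 - ε) ^ p.toReal < ‖g - f i‖ ^ p.toReal := by
  have hp0 : p ≠ 0 := by
    have := Fact.out (p := 1 ≤ p); intro h0; simp [h0] at this
  set q := p.toReal with hqdef
  have hq1 : 1 ≤ q := by
    rw [hqdef, ← ENNReal.toReal_one]
    exact ENNReal.toReal_mono hp (Fact.out)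
  have hq0 : 0 < q := lt_of_lt_of_le one_pos hq1
  -- total lintegral of each f i is 1
  have htot : ∀ i, ∫⁻ x, (‖f i x‖₊ : ℝ≥0∞) ^ q ∂(volume.restrict (Set.Icc (0:ℝ) 1)) = 1 := by
    intro i
    rw [lintegral_norm_rpow_eq p hp (f i), hf i, Real.one_rpow, ENNReal.ofReal_one]
  -- ε^q bounds
  have hεq_pos : (0:ℝ) < ε ^ q := Real.rpow_pos_of_pos hε.1 q
  have hεq_lt1 : ε ^ q < 1 := Real.rpow_lt_one hε.1.le hε.2 hq0
  -- absolute continuity: choose δ i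
  have hδex : ∀ i : Fin n, ∃ δ : ℝ≥0∞, 0 < δ ∧
      ∀ s, (volume.restrict (Set.Icc (0:ℝ) 1)) s < δ → ∫⁻ x in s, (‖f i x‖₊ : ℝ≥0∞) ^ q ∂(volume.restrict (Set.Icc (0:ℝ) 1)) < ENNReal.ofReal (ε ^ q) := by
    intro i
    obtain ⟨δ, hδ0, hδ⟩ := exists_pos_setLIntegral_lt_of_measure_lt (μ := volume.restrict (Set.Icc (0:ℝ) 1))
      (f := fun x => (‖f i x‖₊ : ℝ≥0∞) ^ q) (by rw [htot i]; exact ENNReal.one_ne_top)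
      (ε := ENNReal.ofReal (ε ^ q)) (by simp [hεq_pos])
    exact ⟨δ, hδ0, hδ⟩
  choose δ hδ0 hδ using hδex
  have hdmin0 : 0 < Finset.univ.inf δ := by
    rw [Finset.lt_inf_iff (by simp : (0:ℝ≥0∞) < ⊤)]
    intro i _; exact hδ0 i
  set d : ℝ≥0∞ := min 1 (Finset.univ.inf δ) with hd
  have hd0 : 0 < d := lt_min one_pos hdmin0
  have hdtop : d ≠ ⊤ := ne_top_of_le_ne_top ENNReal.one_ne_top (min_le_left _ _)
  set r : ℝ := d.toReal / 2 with hr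
  have hdr0 : 0 < d.toReal := ENNReal.toReal_pos hd0.ne' hdtop
  have hr0 : 0 < r := by rw [hr]; positivity
  have hr1 : r ≤ 1 := by
    have : d.toReal ≤ 1 := by
      rw [← ENNReal.toReal_one]
      exact ENNReal.toReal_mono ENNReal.one_ne_top (min_le_left _ _)
    rw [hr]; linarith
  have hofr_lt : ∀ i, ENNReal.ofReal r < δ i := by
    intro i
    have h1 : ENNReal.ofReal r = d / 2 := by
      rw [hr, ENNReal.ofReal_div_of_pos two_pos, ENNReal.ofReal_toReal hdtop]
      norm_num
    have h2 : d / 2 < d := ENNReal.half_lt_self hd0.ne' hdtop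
    have h3 : d ≤ δ i := le_trans (min_le_right _ _) (Finset.inf_le (Finset.mem_univ i))
    rw [h1]; exact lt_of_lt_of_le h2 h3
  -- the set A
  set A : Set ℝ := Set.Icc 0 r with hA
  have hAm : MeasurableSet A := measurableSet_Icc
  have hμA : (volume.restrict (Set.Icc (0:ℝ) 1)) A = ENNReal.ofReal r := by
    rw [Measure.restrict_apply hAm,
      Set.inter_eq_self_of_subset_left (Set.Icc_subset_Icc_right hr1),
      Real.volume_Icc, sub_zero]
  have hμAne : (volume.restrict (Set.Icc (0:ℝ) 1)) A ≠ ⊤ := by rw [hμA]; exact ENNReal.ofReal_ne_top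
  -- the function g
  set c : ℝ := r ^ (-(1/q)) with hc
  have hc0 : 0 < c := Real.rpow_pos_of_pos hr0 _
  set g : Lp ℝ p (volume.restrict (Set.Icc (0:ℝ) 1)) := indicatorConstLp p hAm hμAne c with hgdef
  have hgnorm : ‖g‖ = 1 := by
    rw [hgdef, norm_indicatorConstLp hp0 hp, measureReal_def, hμA, ENNReal.toReal_ofReal hr0.le,
      Real.norm_of_nonneg hc0.le, hc, ← Real.rpow_add hr0]
    simp [hqdef]
  refine ⟨g, hgnorm, fun i => ?_⟩
  -- abbreviations
  set F := f i with hF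
  set I : ℝ≥0∞ := ∫⁻ x in A, (‖F x‖₊ : ℝ≥0∞) ^ q ∂(volume.restrict (Set.Icc (0:ℝ) 1)) with hI
  have hI_lt : I < ENNReal.ofReal (ε ^ q) := hδ i A (by rw [hμA]; exact hofr_lt i)
  have hI_ne : I ≠ ⊤ := ne_top_of_lt (lt_of_lt_of_le hI_lt le_top)
  have hI_le1 : I ≤ 1 := by
    rw [hI, ← htot i]
    exact setLIntegral_le_lintegral _ _
  -- g vanishes a.e. off A
  have hg_off : ∀ᵐ x ∂(volume.restrict (Set.Icc (0:ℝ) 1)), x ∉ A → g x = 0 := indicatorConstLp_coeFn_notMem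
  -- the total integral splits
  have hsplit : ∫⁻ x, (‖(g - F) x‖₊ : ℝ≥0∞) ^ q ∂(volume.restrict (Set.Icc (0:ℝ) 1))
      = (∫⁻ x in A, (‖(g - F) x‖₊ : ℝ≥0∞) ^ q ∂(volume.restrict (Set.Icc (0:ℝ) 1)))
        + ∫⁻ x in Aᶜ, (‖(g - F) x‖₊ : ℝ≥0∞) ^ q ∂(volume.restrict (Set.Icc (0:ℝ) 1)) :=
    (lintegral_add_compl _ hAm).symm
  -- off A, (g - F) agrees with -F
  have hcompl : ∫⁻ x in Aᶜ, (‖(g - F) x‖₊ : ℝ≥0∞) ^ q ∂(volume.restrict (Set.Icc (0:ℝ) 1))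
      = ∫⁻ x in Aᶜ, (‖F x‖₊ : ℝ≥0∞) ^ q ∂(volume.restrict (Set.Icc (0:ℝ) 1)) := by
    apply lintegral_congr_ae
    have h1 : ⇑(g - F) =ᵐ[(volume.restrict (Set.Icc (0:ℝ) 1)).restrict Aᶜ] (⇑g - ⇑F) := (Lp.coeFn_sub g F).restrict
    have h2 : ∀ᵐ x ∂(volume.restrict (Set.Icc (0:ℝ) 1)).restrict Aᶜ, x ∉ A → g x = 0 := ae_restrict_of_ae hg_off
    have h3 : ∀ᵐ x ∂(volume.restrict (Set.Icc (0:ℝ) 1)).restrict Aᶜ, x ∈ Aᶜ := ae_restrict_mem hAm.compl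
    filter_upwards [h1, h2, h3] with x h1x h2x h3x
    rw [h1x, Pi.sub_apply, h2x h3x, zero_sub, nnnorm_neg]
  have hcompl_val : ∫⁻ x in Aᶜ, (‖F x‖₊ : ℝ≥0∞) ^ q ∂(volume.restrict (Set.Icc (0:ℝ) 1)) = 1 - I := by
    have := lintegral_add_compl (fun x => (‖F x‖₊ : ℝ≥0∞) ^ q) hAm (μ := volume.restrict (Set.Icc (0:ℝ) 1))
    rw [htot i] at this
    rw [← this, hI, ENNReal.add_sub_cancel_left hI_ne]
  -- on A: lower bound via triangle inequality
  have hgA : ∫⁻ x in A, (‖g x‖₊ : ℝ≥0∞) ^ q ∂(volume.restrict (Set.Icc (0:ℝ) 1)) = 1 := by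
    have hzero : ∫⁻ x in Aᶜ, (‖g x‖₊ : ℝ≥0∞) ^ q ∂(volume.restrict (Set.Icc (0:ℝ) 1)) = 0 := by
      rw [lintegral_eq_zero_iff']
      · have h2 : ∀ᵐ x ∂(volume.restrict (Set.Icc (0:ℝ) 1)).restrict Aᶜ, x ∉ A → g x = 0 := ae_restrict_of_ae hg_off
        have h3 : ∀ᵐ x ∂(volume.restrict (Set.Icc (0:ℝ) 1)).restrict Aᶜ, x ∈ Aᶜ := ae_restrict_mem hAm.compl
        filter_upwards [h2, h3] with x h2x h3x
        simp [h2x h3x, ENNReal.zero_rpow_of_pos hq0]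
      · exact ((Lp.aestronglyMeasurable g).restrict.nnnorm.aemeasurable.coe_nnreal_ennreal).pow_const _
    have := lintegral_add_compl (fun x => (‖g x‖₊ : ℝ≥0∞) ^ q) hAm (μ := volume.restrict (Set.Icc (0:ℝ) 1))
    rw [hzero, add_zero] at this
    rw [this, lintegral_norm_rpow_eq p hp g, hgnorm, Real.one_rpow, ENNReal.ofReal_one]
  have htri : ENNReal.ofReal ((1 - ε) ^ q) ≤ ∫⁻ x in A, (‖(g - F) x‖₊ : ℝ≥0∞) ^ q ∂(volume.restrict (Set.Icc (0:ℝ) 1)) := by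
    set ν : Measure ℝ := (volume.restrict (Set.Icc (0:ℝ) 1)).restrict A with hν
    have hmg : AEStronglyMeasurable (⇑g) ν := (Lp.aestronglyMeasurable g).restrict
    have hmF : AEStronglyMeasurable (⇑F) ν := (Lp.aestronglyMeasurable F).restrict
    have heg : eLpNorm (⇑g) p ν = 1 := by
      simp only [eLpNorm_eq_lintegral_rpow_enorm_toReal hp0 hp, enorm_eq_nnnorm]
      rw [hν]
      rw [hgA, ENNReal.one_rpow]
    have heF : eLpNorm (⇑F) p ν = I ^ (1/q) := by
      rw [eLpNorm_eq_lintegral_rpow_enorm_toReal hp0 hp]; simp only [enorm_eq_nnnorm]; rw [hν, ← hI]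
    have heF_le : eLpNorm (⇑F) p ν ≤ ENNReal.ofReal ε := by
      rw [heF]
      calc I ^ (1/q) ≤ (ENNReal.ofReal (ε ^ q)) ^ (1/q) :=
            ENNReal.rpow_le_rpow hI_lt.le (by positivity)
        _ = ENNReal.ofReal ε := by
            rw [ENNReal.ofReal_rpow_of_pos hεq_pos, ← Real.rpow_mul hε.1.le,
              mul_one_div_cancel hq0.ne', Real.rpow_one]
    have htriangle : (1:ℝ≥0∞) ≤ eLpNorm (⇑g - ⇑F) p ν + eLpNorm (⇑F) p ν := by
      rw [← heg]
      have : ⇑g = (⇑g - ⇑F) + ⇑F := by ext x; simp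
      nth_rewrite 1 [this]
      exact eLpNorm_add_le (hmg.sub hmF) hmF (Fact.out)
    have hlow : ENNReal.ofReal (1 - ε) ≤ eLpNorm (⇑g - ⇑F) p ν := by
      have h1 : (1:ℝ≥0∞) - eLpNorm (⇑F) p ν ≤ eLpNorm (⇑g - ⇑F) p ν :=
        tsub_le_iff_right.mpr htriangle
      have h2 : ENNReal.ofReal (1 - ε) ≤ 1 - eLpNorm (⇑F) p ν := by
        rw [ENNReal.ofReal_sub _ hε.1.le, ENNReal.ofReal_one]
        exact tsub_le_tsub_left heF_le 1
      exact le_trans h2 h1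
    have hsub_ae : ⇑(g - F) =ᵐ[ν] (⇑g - ⇑F) := (Lp.coeFn_sub g F).restrict
    have heS : eLpNorm (⇑g - ⇑F) p ν
        = (∫⁻ x in A, (‖(g - F) x‖₊ : ℝ≥0∞) ^ q ∂(volume.restrict (Set.Icc (0:ℝ) 1))) ^ (1/q) := by
      rw [← eLpNorm_congr_ae hsub_ae, eLpNorm_eq_lintegral_rpow_enorm_toReal hp0 hp]; simp only [enorm_eq_nnnorm]; rw [hν]
    calc ENNReal.ofReal ((1 - ε) ^ q) = (ENNReal.ofReal (1 - ε)) ^ q := by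
          rw [ENNReal.ofReal_rpow_of_pos (by linarith [hε.2])]
      _ ≤ (eLpNorm (⇑g - ⇑F) p ν) ^ q := ENNReal.rpow_le_rpow hlow hq0.le
      _ = ∫⁻ x in A, (‖(g - F) x‖₊ : ℝ≥0∞) ^ q ∂(volume.restrict (Set.Icc (0:ℝ) 1)) := by
          rw [heS, ← ENNReal.rpow_mul, one_div_mul_cancel hq0.ne', ENNReal.rpow_one]
  -- put everything together
  have hTfin : ∫⁻ x, (‖(g - F) x‖₊ : ℝ≥0∞) ^ q ∂(volume.restrict (Set.Icc (0:ℝ) 1)) = ENNReal.ofReal (‖g - F‖ ^ q) :=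
    lintegral_norm_rpow_eq p hp (g - F)
  have hTbound : ENNReal.ofReal ((1 - ε) ^ q) + (1 - I)
      ≤ ENNReal.ofReal (‖g - F‖ ^ q) := by
    rw [← hTfin, hsplit, hcompl, hcompl_val]
    exact add_le_add htri le_rfl
  have hport := ENNReal.toReal_mono ENNReal.ofReal_ne_top hTbound
  rw [ENNReal.toReal_ofReal (by positivity : (0:ℝ) ≤ ‖g - F‖ ^ q)] at hport
  have hadd : (ENNReal.ofReal ((1 - ε) ^ q) + (1 - I)).toReal
      = (1 - ε) ^ q + (1 - I.toReal) := by
    rw [ENNReal.toReal_add ENNReal.ofReal_ne_top (by simp : (1:ℝ≥0∞) - I ≠ ⊤),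
      ENNReal.toReal_ofReal (Real.rpow_nonneg (by linarith [hε.2]) _), ENNReal.toReal_sub_of_le hI_le1 ENNReal.one_ne_top,
      ENNReal.toReal_one]
  rw [hadd] at hport
  have hIto : I.toReal < ε ^ q := ENNReal.toReal_lt_of_lt_ofReal hI_lt
  linarith


/-- lower-bound construction in `L_p[0,1]`, `1 ≤ p < ∞`: given finitely many
norm-one functions and `ε ∈ (0,1)`, some unit vector is far from all of them; consequently
`T(L_p[0,1]) ≥ 2^{1/p}`. -/
theorem exists_far_unit_vector_Lp_and_thickness_lower_bound
    (p : ℝ≥0∞) [Fact (1 ≤ p)] (hp : p ≠ ⊤)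
    (n : ℕ) (f : Fin n → Lp ℝ p (volume.restrict (Set.Icc (0:ℝ) 1)))
    (hf : ∀ i, ‖f i‖ = 1) (ε : ℝ) (hε : ε ∈ Set.Ioo (0:ℝ) 1) :
    (∃ g : Lp ℝ p (volume.restrict (Set.Icc (0:ℝ) 1)), ‖g‖ = 1 ∧
      ∀ i, 1 - ε ^ p.toReal + (1 - ε) ^ p.toReal < ‖g - f i‖ ^ p.toReal) ∧
    2 ^ (1 / p.toReal) ≤ thickness (Lp ℝ p (volume.restrict (Set.Icc (0:ℝ) 1))) := by
  have hp0 : p ≠ 0 := by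
    have := Fact.out (p := 1 ≤ p); intro h0; simp [h0] at this
  have hq1 : 1 ≤ p.toReal := by
    rw [← ENNReal.toReal_one]; exact ENNReal.toReal_mono hp (Fact.out)
  have hq0 : 0 < p.toReal := lt_of_lt_of_le one_pos hq1
  refine ⟨key_lemma p hp n f hf ε hε, ?_⟩
  -- the set is nonempty
  obtain ⟨g0, hg0, -⟩ := key_lemma p hp 0 Fin.elim0 (fun i => i.elim0) (1/2) (by norm_num)
  have hne : {ε : ℝ | 0 < ε ∧ ∃ F : Finset (Lp ℝ p (volume.restrict (Set.Icc (0:ℝ) 1))), (∀ x ∈ F, ‖x‖ = 1) ∧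
      ∀ y : Lp ℝ p (volume.restrict (Set.Icc (0:ℝ) 1)), ‖y‖ ≤ 1 → ∃ x ∈ F, ‖y - x‖ ≤ ε}.Nonempty := by
    refine ⟨2, two_pos, {g0}, ?_, ?_⟩
    · intro x hx; rw [Finset.mem_singleton] at hx; rw [hx]; exact hg0
    · intro y hy
      refine ⟨g0, Finset.mem_singleton_self _, ?_⟩
      calc ‖y - g0‖ ≤ ‖y‖ + ‖g0‖ := norm_sub_le _ _
        _ ≤ 2 := by rw [hg0]; linarith
  rw [thickness]
  apply le_csInf hne
  rintro ε' ⟨hε'0, F, hF1, hF2⟩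
  -- key bound for each t ∈ (0,1)
  have hbound : ∀ t ∈ Set.Ioo (0:ℝ) 1, 1 - t ^ p.toReal + (1 - t) ^ p.toReal ≤ ε' ^ p.toReal := by
    intro t ht
    obtain ⟨g, hg1, hg2⟩ := key_lemma p hp (Fintype.card ↥F)
      (fun j => ((Fintype.equivFin ↥F).symm j : Lp ℝ p (volume.restrict (Set.Icc (0:ℝ) 1))))
      (fun j => hF1 _ ((Fintype.equivFin ↥F).symm j).2) t ht
    obtain ⟨x, hxF, hx⟩ := hF2 g (le_of_eq hg1)
    have h1 := hg2 (Fintype.equivFin ↥F ⟨x, hxF⟩)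
    rw [Equiv.symm_apply_apply] at h1
    calc 1 - t ^ p.toReal + (1 - t) ^ p.toReal ≤ ‖g - x‖ ^ p.toReal := h1.le
      _ ≤ ε' ^ p.toReal := Real.rpow_le_rpow (norm_nonneg _) hx hq0.le
  -- take the limit t → 0⁺
  have h2le : (2:ℝ) ≤ ε' ^ p.toReal := by
    have hcont : Filter.Tendsto (fun t : ℝ => 1 - t ^ p.toReal + (1 - t) ^ p.toReal)
        (nhdsWithin 0 (Set.Ioi 0)) (nhds 2) := by
      have hc1 : ContinuousAt (fun t : ℝ => t ^ p.toReal) 0 :=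
        Real.continuousAt_rpow_const 0 p.toReal (Or.inr hq0.le)
      have hc2 : ContinuousAt (fun t : ℝ => (1 - t) ^ p.toReal) 0 := by
        have : ContinuousAt (fun s : ℝ => s ^ p.toReal) (1 - 0) :=
          Real.continuousAt_rpow_const _ _ (Or.inl (by norm_num))
        exact this.comp (continuousAt_const.sub continuousAt_id)
      have : ContinuousAt (fun t : ℝ => 1 - t ^ p.toReal + (1 - t) ^ p.toReal) 0 :=
        (continuousAt_const.sub hc1).add hc2
      have h0 : (1:ℝ) - (0:ℝ) ^ p.toReal + (1 - 0) ^ p.toReal = 2 := by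
        rw [Real.zero_rpow hq0.ne', sub_zero, Real.one_rpow]; norm_num
      rw [← h0]
      exact this.continuousWithinAt
    refine le_of_tendsto hcont ?_
    filter_upwards [Ioo_mem_nhdsGT_of_mem (by norm_num : (0:ℝ) ∈ Set.Ico (0:ℝ) 1)] with t ht
    exact hbound t ht
  -- conclude
  calc (2:ℝ) ^ (1 / p.toReal) ≤ (ε' ^ p.toReal) ^ (1 / p.toReal) :=
        Real.rpow_le_rpow (by norm_num) h2le (by positivity)
    _ = ε' := by
        rw [← Real.rpow_mul hε'0.le, mul_one_div_cancel hq0.ne', Real.rpow_one]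
end

section
/- For 1 ≤ p ≤ 2 and any two norm-one elements f, f_0 of L_p[0,1], one has min{‖f + f_0‖, ‖f − f_0‖} ≤ 2^{1/p}. Consequently T(L_p[0,1]) ≤ 2^{1/p} for 1 ≤ p ≤ 2. -/
open scoped ENNReal NNReal

open MeasureTheory

private lemma clarkson_pointwise {r : ℝ} (hr1 : 1 ≤ r) (hr2 : r ≤ 2) (x y : ℝ) :
    (‖x + y‖₊ : ℝ≥0∞) ^ r + (‖x - y‖₊ : ℝ≥0∞) ^ r
      ≤ 2 * ((‖x‖₊ : ℝ≥0∞) ^ r + (‖y‖₊ : ℝ≥0∞) ^ r) := by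
  set s : ℝ := r / 2 with hs
  have hs0 : 0 < s := by positivity
  have hs1 : s ≤ 1 := by rw [hs]; linarith
  have hpow : ∀ a : ℝ≥0∞, a ^ r = (a ^ (2 : ℝ)) ^ s := by
    intro a
    rw [← ENNReal.rpow_mul]
    congr 1
    rw [hs]; ring
  have par : (‖x + y‖₊ : ℝ≥0∞) ^ (2 : ℝ) + (‖x - y‖₊ : ℝ≥0∞) ^ (2 : ℝ)
      = 2 * ((‖x‖₊ : ℝ≥0∞) ^ (2 : ℝ) + (‖y‖₊ : ℝ≥0∞) ^ (2 : ℝ)) := by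
    simp only [ENNReal.rpow_two]
    rw [← ENNReal.coe_pow, ← ENNReal.coe_pow, ← ENNReal.coe_pow, ← ENNReal.coe_pow,
      ← ENNReal.coe_add, ← ENNReal.coe_add]
    rw [show ((2 : ℝ≥0∞)) = ((2 : ℝ≥0) : ℝ≥0∞) by norm_num, ← ENNReal.coe_mul,
      ENNReal.coe_inj]
    have : ((‖x + y‖₊ ^ 2 + ‖x - y‖₊ ^ 2 : ℝ≥0) : ℝ)
        = ((2 * (‖x‖₊ ^ 2 + ‖y‖₊ ^ 2) : ℝ≥0) : ℝ) := by
      push_cast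
      simp only [coe_nnnorm, Real.norm_eq_abs, sq_abs]
      ring
    exact NNReal.coe_injective this
  have conc : ∀ X Y : ℝ≥0∞, X ^ s + Y ^ s ≤ 2 ^ (1 - s) * (X + Y) ^ s := by
    intro X Y
    have h1s : (1 : ℝ) ≤ 1 / s := by
      rw [le_one_div (by norm_num) hs0]; simpa using hs1
    have h := ENNReal.rpow_add_le_mul_rpow_add_rpow (X ^ s) (Y ^ s) h1s
    have hXX : (X ^ s) ^ (1 / s) = X := by
      rw [← ENNReal.rpow_mul, mul_one_div_cancel hs0.ne', ENNReal.rpow_one]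
    have hYY : (Y ^ s) ^ (1 / s) = Y := by
      rw [← ENNReal.rpow_mul, mul_one_div_cancel hs0.ne', ENNReal.rpow_one]
    rw [hXX, hYY] at h
    have h2 := ENNReal.rpow_le_rpow h hs0.le
    rw [← ENNReal.rpow_mul, one_div, inv_mul_cancel₀ hs0.ne', ENNReal.rpow_one] at h2
    calc X ^ s + Y ^ s ≤ ((2 : ℝ≥0∞) ^ (s⁻¹ - 1) * (X + Y)) ^ s := h2
      _ = 2 ^ (1 - s) * (X + Y) ^ s := by
          rw [ENNReal.mul_rpow_of_nonneg _ _ hs0.le, ← ENNReal.rpow_mul]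
          congr 2
          field_simp
  calc (‖x + y‖₊ : ℝ≥0∞) ^ r + (‖x - y‖₊ : ℝ≥0∞) ^ r
      = ((‖x + y‖₊ : ℝ≥0∞) ^ (2:ℝ)) ^ s + ((‖x - y‖₊ : ℝ≥0∞) ^ (2:ℝ)) ^ s := by
        rw [hpow, hpow]
    _ ≤ 2 ^ (1 - s) * ((‖x + y‖₊ : ℝ≥0∞) ^ (2:ℝ) + (‖x - y‖₊ : ℝ≥0∞) ^ (2:ℝ)) ^ s :=
        conc _ _
    _ = 2 ^ (1 - s) * (2 * ((‖x‖₊ : ℝ≥0∞) ^ (2:ℝ) + (‖y‖₊ : ℝ≥0∞) ^ (2:ℝ))) ^ s := by rw [par]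
    _ = 2 * (((‖x‖₊ : ℝ≥0∞) ^ (2:ℝ) + (‖y‖₊ : ℝ≥0∞) ^ (2:ℝ))) ^ s := by
        rw [ENNReal.mul_rpow_of_nonneg _ _ hs0.le, ← mul_assoc,
          show (2 : ℝ≥0∞) ^ s = 2 ^ (s : ℝ) from rfl,
          ← ENNReal.rpow_add _ _ two_ne_zero ENNReal.ofNat_ne_top]
        norm_num
    _ ≤ 2 * (((‖x‖₊ : ℝ≥0∞) ^ (2:ℝ)) ^ s + ((‖y‖₊ : ℝ≥0∞) ^ (2:ℝ)) ^ s) :=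
        mul_le_mul_right (ENNReal.rpow_add_le_add_rpow _ _ hs0.le hs1) 2
    _ = 2 * ((‖x‖₊ : ℝ≥0∞) ^ r + (‖y‖₊ : ℝ≥0∞) ^ r) := by rw [← hpow, ← hpow]

private lemma min_norm_key {α : Type*} [MeasurableSpace α] (μ : Measure α)
    (p : ℝ≥0∞) [Fact (1 ≤ p)] (hp2 : p ≤ 2) (f g : Lp ℝ p μ)
    (hf : ‖f‖ ≤ 1) (hg : ‖g‖ ≤ 1) :
    min ‖f + g‖ ‖f - g‖ ≤ 2 ^ (1 / p.toReal) := by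
  have hp1 : (1 : ℝ≥0∞) ≤ p := Fact.out
  have hp0 : p ≠ 0 := (lt_of_lt_of_le one_pos hp1).ne'
  have hpt : p ≠ ∞ := (lt_of_le_of_lt hp2 (by norm_num)).ne
  set r : ℝ := p.toReal with hrdef
  have hr1 : 1 ≤ r := by
    rw [← ENNReal.toReal_one]; exact ENNReal.toReal_mono hpt hp1
  have hr2 : r ≤ 2 := by
    have := ENNReal.toReal_mono (ENNReal.ofNat_ne_top) hp2
    simpa using this
  have hr0 : (0:ℝ) < r := lt_of_lt_of_le one_pos hr1
  have hm : ∀ h : Lp ℝ p μ, AEMeasurable (fun a => (‖h a‖₊ : ℝ≥0∞) ^ r) μ :=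
    fun h => (AEStronglyMeasurable.enorm (Lp.aestronglyMeasurable h)).pow_const r
  have hsn : ∀ h : Lp ℝ p μ,
      eLpNorm h p μ = (∫⁻ a, (‖h a‖₊ : ℝ≥0∞) ^ r ∂μ) ^ (1 / r) := fun h =>
    eLpNorm_eq_lintegral_rpow_enorm_toReal hp0 hpt
  have hIle : ∀ h : Lp ℝ p μ, ‖h‖ ≤ 1 → (∫⁻ a, (‖h a‖₊ : ℝ≥0∞) ^ r ∂μ) ≤ 1 := by
    intro h hh
    have h1 : eLpNorm h p μ ≤ 1 := by
      rw [← ENNReal.ofReal_one]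
      refine (ENNReal.le_ofReal_iff_toReal_le (Lp.eLpNorm_ne_top h) one_pos.le).mpr ?_
      rwa [← Lp.norm_def]
    rw [hsn h] at h1
    have h2 := ENNReal.rpow_le_rpow h1 hr0.le
    rwa [← ENNReal.rpow_mul, one_div, inv_mul_cancel₀ hr0.ne', ENNReal.rpow_one,
      ENNReal.one_rpow] at h2
  have hptw : ∀ᵐ a ∂μ,
      (‖(f + g) a‖₊ : ℝ≥0∞) ^ r + (‖(f - g) a‖₊ : ℝ≥0∞) ^ r
        ≤ 2 * ((‖f a‖₊ : ℝ≥0∞) ^ r + (‖g a‖₊ : ℝ≥0∞) ^ r) := by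
    filter_upwards [Lp.coeFn_add f g, Lp.coeFn_sub f g] with a ha hb
    rw [ha, hb, Pi.add_apply, Pi.sub_apply]
    exact clarkson_pointwise hr1 hr2 (f a) (g a)
  have hIsum : (∫⁻ a, (‖(f + g) a‖₊ : ℝ≥0∞) ^ r ∂μ)
      + (∫⁻ a, (‖(f - g) a‖₊ : ℝ≥0∞) ^ r ∂μ) ≤ 4 := by
    calc (∫⁻ a, (‖(f + g) a‖₊ : ℝ≥0∞) ^ r ∂μ) + (∫⁻ a, (‖(f - g) a‖₊ : ℝ≥0∞) ^ r ∂μ)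
        = ∫⁻ a, ((‖(f + g) a‖₊ : ℝ≥0∞) ^ r + (‖(f - g) a‖₊ : ℝ≥0∞) ^ r) ∂μ :=
          (lintegral_add_left' (hm (f + g)) _).symm
      _ ≤ ∫⁻ a, 2 * ((‖f a‖₊ : ℝ≥0∞) ^ r + (‖g a‖₊ : ℝ≥0∞) ^ r) ∂μ := lintegral_mono_ae hptw
      _ = 2 * ((∫⁻ a, (‖f a‖₊ : ℝ≥0∞) ^ r ∂μ) + (∫⁻ a, (‖g a‖₊ : ℝ≥0∞) ^ r ∂μ)) := by
          rw [lintegral_const_mul' _ _ ENNReal.ofNat_ne_top, lintegral_add_left' (hm f)]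
      _ ≤ 2 * (1 + 1) := mul_le_mul_right (add_le_add (hIle f hf) (hIle g hg)) 2
      _ = 4 := by norm_num
  have hmin : min (∫⁻ a, (‖(f + g) a‖₊ : ℝ≥0∞) ^ r ∂μ)
      (∫⁻ a, (‖(f - g) a‖₊ : ℝ≥0∞) ^ r ∂μ) ≤ 2 := by
    by_contra hc
    push_neg at hc
    have h1 := lt_of_lt_of_le hc (min_le_left _ _)
    have h2 := lt_of_lt_of_le hc (min_le_right _ _)
    have : (4 : ℝ≥0∞) < 4 := by
      calc (4 : ℝ≥0∞) = 2 + 2 := by norm_num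
        _ < _ + _ := ENNReal.add_lt_add h1 h2
        _ ≤ 4 := hIsum
    exact lt_irrefl _ this
  have hfin : ∀ h : Lp ℝ p μ,
      (∫⁻ a, (‖h a‖₊ : ℝ≥0∞) ^ r ∂μ) ≤ 2 → ‖h‖ ≤ 2 ^ (1 / r) := by
    intro h hh
    have h1 : eLpNorm h p μ ≤ (2 : ℝ≥0∞) ^ (1 / r) := by
      rw [hsn h]; exact ENNReal.rpow_le_rpow hh (by positivity)
    have h2 : ((2 : ℝ≥0∞) ^ (1 / r)).toReal = (2 : ℝ) ^ (1 / r) := by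
      rw [← ENNReal.toReal_rpow]; norm_num
    rw [Lp.norm_def, ← h2]
    exact ENNReal.toReal_mono (by simp [ENNReal.rpow_eq_top_iff]) h1
  rcases min_le_iff.mp hmin with h | h
  · exact le_trans (min_le_left _ _) (hfin _ h)
  · exact le_trans (min_le_right _ _) (hfin _ h)


/-- for `1 ≤ p ≤ 2` and norm-one `f, f₀ ∈ L_p[0,1]`,
`min {‖f+f₀‖, ‖f−f₀‖} ≤ 2^{1/p}`; consequently `T(L_p[0,1]) ≤ 2^{1/p}`. -/
theorem min_norm_add_sub_le_and_thickness_Lp_le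
    (p : ℝ≥0∞) [Fact (1 ≤ p)] (hp2 : p ≤ 2) :
    (∀ f f₀ : Lp ℝ p (volume.restrict (Set.Icc (0:ℝ) 1)), ‖f‖ = 1 → ‖f₀‖ = 1 →
      min ‖f + f₀‖ ‖f - f₀‖ ≤ 2 ^ (1 / p.toReal)) ∧
    thickness (Lp ℝ p (volume.restrict (Set.Icc (0:ℝ) 1))) ≤ 2 ^ (1 / p.toReal) := by
  classical
  have hp1 : (1 : ℝ≥0∞) ≤ p := Fact.out
  have hp0 : p ≠ 0 := (lt_of_lt_of_le one_pos hp1).ne'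
  have hpt : p ≠ ∞ := (lt_of_le_of_lt hp2 (by norm_num)).ne
  set μ : Measure ℝ := volume.restrict (Set.Icc (0:ℝ) 1) with hμdef
  constructor
  · intro f f₀ hf hf₀
    exact min_norm_key μ p hp2 f f₀ hf.le hf₀.le
  · have hμuniv : μ Set.univ = 1 := by
      rw [hμdef, Measure.restrict_apply_univ, Real.volume_Icc]
      norm_num
    set f₀ : Lp ℝ p μ :=
      indicatorConstLp p MeasurableSet.univ (by rw [hμuniv]; exact ENNReal.one_ne_top) (1 : ℝ) with hf₀def
    have hnorm : ‖f₀‖ = 1 := by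
      rw [hf₀def, norm_indicatorConstLp hp0 hpt, Measure.real, hμuniv]
      simp
    have hBdd : BddBelow {ε : ℝ | 0 < ε ∧ ∃ F : Finset (Lp ℝ p μ), (∀ x ∈ F, ‖x‖ = 1) ∧
        ∀ y : Lp ℝ p μ, ‖y‖ ≤ 1 → ∃ x ∈ F, ‖y - x‖ ≤ ε} :=
      ⟨0, fun x hx => hx.1.le⟩
    refine csInf_le hBdd ?_
    refine ⟨Real.rpow_pos_of_pos two_pos _, {f₀, -f₀}, ?_, ?_⟩
    · intro x hx
      rcases Finset.mem_insert.mp hx with h | h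
      · rw [h]; exact hnorm
      · rw [Finset.mem_singleton.mp h, norm_neg]; exact hnorm
    · intro y hy
      have hkey := min_norm_key μ p hp2 y f₀ hy hnorm.le
      rcases min_le_iff.mp hkey with h | h
      · refine ⟨-f₀, by simp, ?_⟩
        rwa [sub_neg_eq_add]
      · exact ⟨f₀, by simp, h⟩
end

section
/- For 1 ≤ p ≤ ∞ and Banach spaces X_1,…,X_N, the thickness constant of the ℓ_p-direct sum satisfies T(X_1 ⊕_p ⋯ ⊕_p X_N) ≤ max{T(X_n) : 1 ≤ n ≤ N}. -/
open scoped ENNReal NNReal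
open Metric

section Aux

theorem PiLp.norm_le_norm_of_forall {p : ℝ≥0∞} [Fact (1 ≤ p)] {ι : Type*} [Fintype ι]
    {α β : ι → Type*} [∀ i, NormedAddCommGroup (α i)] [∀ i, NormedAddCommGroup (β i)]
    (f : PiLp p α) (g : PiLp p β) (h : ∀ i, ‖f i‖ ≤ ‖g i‖) : ‖f‖ ≤ ‖g‖ := by
  rcases eq_or_ne p ∞ with rfl | hp
  · rw [PiLp.norm_eq_ciSup, PiLp.norm_eq_ciSup]
    rcases isEmpty_or_nonempty ι with hι | hι
    · simp [ciSup_of_empty]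
    · exact ciSup_le fun i =>
        (h i).trans (le_ciSup (f := fun i => ‖g i‖) (Set.finite_range _).bddAbove i)
  · have h0 : p ≠ 0 := (zero_lt_one.trans_le (Fact.out : 1 ≤ p)).ne'
    have hpt : 0 < p.toReal := ENNReal.toReal_pos h0 hp
    rw [PiLp.norm_eq_sum hpt, PiLp.norm_eq_sum hpt]
    apply Real.rpow_le_rpow (by positivity) ?_ (by positivity)
    exact Finset.sum_le_sum fun i _ => Real.rpow_le_rpow (norm_nonneg _) (h i) hpt.le

theorem PiLp.norm_eq_norm_of_forall {p : ℝ≥0∞} [Fact (1 ≤ p)] {ι : Type*} [Fintype ι]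
    {α β : ι → Type*} [∀ i, NormedAddCommGroup (α i)] [∀ i, NormedAddCommGroup (β i)]
    (f : PiLp p α) (g : PiLp p β) (h : ∀ i, ‖f i‖ = ‖g i‖) : ‖f‖ = ‖g‖ :=
  le_antisymm (PiLp.norm_le_norm_of_forall f g fun i => (h i).le)
    (PiLp.norm_le_norm_of_forall g f fun i => (h i).ge)

theorem exists_norm_one' (X : Type*) [NormedAddCommGroup X] [NormedSpace ℝ X] [Nontrivial X] :
    ∃ x : X, ‖x‖ = 1 := by
  obtain ⟨x, hx⟩ := exists_ne (0 : X)
  exact ⟨‖x‖⁻¹ • x, by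
    rw [norm_smul, norm_inv, norm_norm, inv_mul_cancel₀ (norm_ne_zero_iff.2 hx)]⟩

theorem two_mem_thicknessSet (X : Type*) [NormedAddCommGroup X] [NormedSpace ℝ X] [Nontrivial X] :
    (2 : ℝ) ∈ {ε : ℝ | 0 < ε ∧ ∃ F : Finset X, (∀ x ∈ F, ‖x‖ = 1) ∧
      ∀ y : X, ‖y‖ ≤ 1 → ∃ x ∈ F, ‖y - x‖ ≤ ε} := by
  obtain ⟨e, he⟩ := exists_norm_one' X
  refine ⟨two_pos, {e}, by simp [he], fun y hy => ⟨e, Finset.mem_singleton_self e, ?_⟩⟩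
  calc ‖y - e‖ ≤ ‖y‖ + ‖e‖ := norm_sub_le _ _
  _ ≤ 2 := by rw [he]; linarith

theorem one_le_of_mem_thicknessSet {X : Type*} [NormedAddCommGroup X] [NormedSpace ℝ X]
    [CompleteSpace X] (hinf : ¬ FiniteDimensional ℝ X) {ε : ℝ}
    (hε : ε ∈ {ε : ℝ | 0 < ε ∧ ∃ F : Finset X, (∀ x ∈ F, ‖x‖ = 1) ∧
      ∀ y : X, ‖y‖ ≤ 1 → ∃ x ∈ F, ‖y - x‖ ≤ ε}) : 1 ≤ ε := by
  classical
  obtain ⟨hε0, F, -, hF⟩ := hε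
  by_contra hlt
  push_neg at hlt
  have key : ∀ k : ℕ, ∃ t : Finset X, ∀ y : X, ‖y‖ ≤ 1 → ∃ x ∈ t, ‖y - x‖ ≤ ε ^ k := by
    intro k
    induction k with
    | zero => exact ⟨{0}, fun y hy => ⟨0, Finset.mem_singleton_self 0, by simpa using hy⟩⟩
    | succ k ih =>
      obtain ⟨t, ht⟩ := ih
      refine ⟨(t ×ˢ F).image (fun q => q.1 + ε ^ k • q.2), fun y hy => ?_⟩
      obtain ⟨x, hxt, hx⟩ := ht y hy
      have hεk : (0:ℝ) < ε ^ k := pow_pos hε0 k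
      set w : X := (ε ^ k)⁻¹ • (y - x) with hw
      have hwn : ‖w‖ ≤ 1 := by
        rw [hw, norm_smul, norm_inv, Real.norm_eq_abs, abs_of_pos hεk]
        rw [inv_mul_le_iff₀ hεk, mul_one]
        exact hx
      obtain ⟨f, hfF, hf⟩ := hF w hwn
      refine ⟨x + ε ^ k • f, Finset.mem_image.2 ⟨(x, f), Finset.mem_product.2 ⟨hxt, hfF⟩, rfl⟩, ?_⟩
      have : y - (x + ε ^ k • f) = ε ^ k • (w - f) := by
        rw [smul_sub, hw, smul_inv_smul₀ hεk.ne']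
        abel
      rw [this, norm_smul, Real.norm_eq_abs, abs_of_pos hεk, pow_succ]
      exact mul_le_mul_of_nonneg_left hf hεk.le
  have tb : TotallyBounded (closedBall (0 : X) 1) := by
    rw [Metric.totallyBounded_iff]
    intro δ hδ
    obtain ⟨k, hk⟩ := exists_pow_lt_of_lt_one hδ hlt
    obtain ⟨t, ht⟩ := key k
    refine ⟨(t : Set X), t.finite_toSet, fun y hy => ?_⟩
    obtain ⟨x, hxt, hx⟩ := ht y (mem_closedBall_zero_iff.1 hy)
    exact Set.mem_biUnion hxt (by rw [mem_ball, dist_eq_norm]; exact lt_of_le_of_lt hx hk)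
  exact hinf <| FiniteDimensional.of_isCompact_closedBall₀ ℝ zero_lt_one
    (TotallyBounded.isCompact_of_isClosed tb Metric.isClosed_closedBall)

end Aux

/-- the thickness of a finite `ℓ_p`-sum is at most the maximum of the
thicknesses of the factors, `1 ≤ p ≤ ∞`. -/
theorem thickness_piLp_le_sup
    (p : ℝ≥0∞) [Fact (1 ≤ p)] (N : ℕ) (hN : 0 < N)
    (X : Fin N → Type*) [∀ n, NormedAddCommGroup (X n)] [∀ n, NormedSpace ℝ (X n)]
    [∀ n, CompleteSpace (X n)] (hinf : ∀ n, ¬ FiniteDimensional ℝ (X n)) :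
    thickness (PiLp p X) ≤ ⨆ n, thickness (X n) := by
  classical
  haveI : NeZero N := ⟨hN.ne'⟩
  have nontriv : ∀ n, Nontrivial (X n) := fun n => by
    rcases subsingleton_or_nontrivial (X n) with h | h
    · exact absurd (inferInstance : FiniteDimensional ℝ (X n)) (hinf n)
    · exact h
  set M := ⨆ n, thickness (X n) with hM
  have Sne : ∀ n, (2:ℝ) ∈ {ε : ℝ | 0 < ε ∧ ∃ F : Finset (X n), (∀ x ∈ F, ‖x‖ = 1) ∧
      ∀ y : X n, ‖y‖ ≤ 1 → ∃ x ∈ F, ‖y - x‖ ≤ ε} := fun n => by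
    haveI := nontriv n; exact two_mem_thicknessSet (X n)
  have hthick_le : ∀ n, thickness (X n) ≤ M := fun n =>
    le_ciSup (f := fun n => thickness (X n)) (Set.finite_range _).bddAbove n
  have hone : ∀ n, (1:ℝ) ≤ thickness (X n) := fun n =>
    le_csInf ⟨2, Sne n⟩ fun b hb => one_le_of_mem_thicknessSet (hinf n) hb
  have hM1 : (1:ℝ) ≤ M := (hone ⟨0, hN⟩).trans (hthick_le ⟨0, hN⟩)
  have main : ∀ ε : ℝ, M < ε → thickness (PiLp p X) ≤ ε := by
    intro ε hε
    unfold thickness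
    apply csInf_le ⟨0, fun x hx => hx.1.le⟩
    set δ : ℝ := (ε - M)/2 with hδdef
    have hδ : 0 < δ := by rw [hδdef]; linarith
    set ε' : ℝ := M + δ with hε'def
    have hε'1 : (1:ℝ) ≤ ε' := by rw [hε'def]; linarith
    have hsum : ε' + δ = ε := by rw [hε'def, hδdef]; ring
    -- per-factor nets at radius ε'
    have hFn : ∀ n, ∃ F : Finset (X n), (∀ x ∈ F, ‖x‖ = 1) ∧
        ∀ y : X n, ‖y‖ ≤ 1 → ∃ x ∈ F, ‖y - x‖ ≤ ε' := by
      intro n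
      have hlt : thickness (X n) < ε' := lt_of_le_of_lt (hthick_le n) (by rw [hε'def]; linarith)
      obtain ⟨s, hs, hslt⟩ := exists_lt_of_csInf_lt ⟨2, Sne n⟩ hlt
      obtain ⟨-, F, hF1, hF2⟩ := hs
      exact ⟨F, hF1, fun y hy => (hF2 y hy).imp fun x hx => ⟨hx.1, hx.2.trans hslt.le⟩⟩
    choose F hF1 hF2 using hFn
    -- finite net on the unit sphere of E = ℓ_p^N(ℝ)
    set E := PiLp p (fun _ : Fin N => ℝ) with hE
    haveI : Nontrivial E := by
      refine ⟨(WithLp.equiv p _).symm 0, (WithLp.equiv p _).symm 1, fun h => ?_⟩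
      have := congrFun ((WithLp.equiv p _).symm.injective h) ⟨0, hN⟩
      exact zero_ne_one this
    obtain ⟨e, he⟩ := exists_norm_one' E
    obtain ⟨G, hGs, hGfin, hGcov⟩ := (isCompact_sphere (0 : E) 1).finite_cover_balls hδ
    have heG : e ∈ sphere (0:E) 1 := by simpa using he
    obtain ⟨b₀, hb₀G, -⟩ := Set.mem_iUnion₂.1 (hGcov heG)
    set GF : Finset E := hGfin.toFinset with hGF
    set Z : Finset (PiLp p X) := (GF ×ˢ Fintype.piFinset F).image
        (fun q => (WithLp.equiv p _).symm (fun n => q.1 n • q.2 n)) with hZ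
    refine ⟨by linarith, Z, ?_, ?_⟩
    · -- all centers are unit vectors
      intro z hz
      obtain ⟨⟨b, x⟩, hq, rfl⟩ := Finset.mem_image.1 hz
      obtain ⟨hbG, hxF⟩ := Finset.mem_product.1 hq
      have hb : ‖b‖ = 1 := by simpa using hGs (hGfin.mem_toFinset.1 hbG)
      have hzn : ‖(WithLp.equiv p _).symm (fun n => b n • x n)‖ = ‖b‖ :=
        PiLp.norm_eq_norm_of_forall _ b fun n => by
          simp [norm_smul, hF1 n _ (Fintype.mem_piFinset.1 hxF n)]
      rw [hzn, hb]
    · -- covering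
      intro y hy
      set a : E := (WithLp.equiv p _).symm (fun n => ‖y n‖) with ha
      have han : ∀ n, a n = ‖y n‖ := fun n => rfl
      have haA : ‖a‖ = ‖y‖ := PiLp.norm_eq_norm_of_forall a y fun n => by
        rw [han n]; exact norm_norm _
      have ha1 : ‖a‖ ≤ 1 := haA ▸ hy
      have hbex : ∃ b ∈ GF, ‖a - b‖ ≤ (1 - ‖a‖) + δ := by
        rcases eq_or_ne a 0 with ha0 | ha0
        · refine ⟨b₀, hGfin.mem_toFinset.2 hb₀G, ?_⟩
          have hb₀ : ‖b₀‖ = 1 := by simpa using hGs hb₀G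
          rw [ha0, zero_sub, norm_neg, hb₀]
          simp only [norm_zero]
          linarith
        · have hna : 0 < ‖a‖ := norm_pos_iff.2 ha0
          set u : E := ‖a‖⁻¹ • a with hu'
          have hu : ‖u‖ = 1 := by
            rw [hu', norm_smul, norm_inv, norm_norm, inv_mul_cancel₀ hna.ne']
          have huS : u ∈ sphere (0:E) 1 := by simpa using hu
          obtain ⟨b, hbG, hub⟩ := Set.mem_iUnion₂.1 (hGcov huS)
          refine ⟨b, hGfin.mem_toFinset.2 hbG, ?_⟩
          have h1 : ‖a - u‖ = 1 - ‖a‖ := by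
            have heq : a - u = (‖a‖ - 1) • u := by
              rw [sub_smul, one_smul, hu', smul_smul, mul_inv_cancel₀ hna.ne', one_smul]
            rw [heq, norm_smul, hu, mul_one, Real.norm_eq_abs, abs_of_nonpos (by linarith),
              neg_sub]
          have h2 : ‖u - b‖ ≤ δ := by
            rw [← dist_eq_norm]; exact (mem_ball.1 hub).le
          have h3 : ‖a - b‖ ≤ ‖a - u‖ + ‖u - b‖ := by
            have := norm_add_le (a - u) (u - b); simpa using this
          rw [h1] at h3; linarith
      obtain ⟨b, hbGF, hab⟩ := hbex
      have hchoice : ∀ n, ∃ x ∈ F n, ‖y n - a n • x‖ ≤ ε' * a n := by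
        intro n
        rcases eq_or_ne (‖y n‖) 0 with h0 | h0
        · obtain ⟨x, hxF, -⟩ := hF2 n 0 (by simp)
          refine ⟨x, hxF, ?_⟩
          rw [han n, h0, norm_eq_zero.1 h0]
          simp
        · have hpos : 0 < ‖y n‖ := lt_of_le_of_ne (norm_nonneg _) (Ne.symm h0)
          obtain ⟨x, hxF, hx⟩ := hF2 n ((‖y n‖)⁻¹ • y n)
            (by rw [norm_smul, norm_inv, norm_norm, inv_mul_cancel₀ hpos.ne'])
          refine ⟨x, hxF, ?_⟩
          have heq : y n - a n • x = ‖y n‖ • ((‖y n‖⁻¹ • y n) - x) := by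
            rw [smul_sub, smul_inv_smul₀ hpos.ne', han n]
          rw [heq, norm_smul, Real.norm_eq_abs, abs_of_pos hpos, han n, mul_comm (ε' : ℝ)]
          exact mul_le_mul_of_nonneg_left hx hpos.le
      choose x hxF hxle using hchoice
      set z : PiLp p X := (WithLp.equiv p _).symm (fun n => b n • x n) with hz'
      refine ⟨z, Finset.mem_image.2 ⟨(b, fun n => x n),
        Finset.mem_product.2 ⟨hbGF, Fintype.mem_piFinset.2 hxF⟩, rfl⟩, ?_⟩
      set c : E := (WithLp.equiv p _).symm (fun n => ε' * a n + |a n - b n|) with hc'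
      have hcn : ∀ n, c n = ε' * a n + |a n - b n| := fun n => rfl
      have hyz : ‖y - z‖ ≤ ‖c‖ := by
        refine PiLp.norm_le_norm_of_forall _ _ fun n => ?_
        have h1 : (y - z) n = y n - b n • x n := by rw [PiLp.sub_apply, hz']; rfl
        have h2 : y n - b n • x n = (y n - a n • x n) + (a n - b n) • x n := by
          rw [sub_smul]; abel
        rw [h1, h2]
        have h3 : ‖(y n - a n • x n) + (a n - b n) • x n‖
            ≤ ε' * a n + |a n - b n| := by
          calc ‖(y n - a n • x n) + (a n - b n) • x n‖
              ≤ ‖y n - a n • x n‖ + ‖(a n - b n) • x n‖ := norm_add_le _ _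
            _ ≤ ε' * a n + |a n - b n| := by
                rw [norm_smul, hF1 n _ (hxF n), mul_one, Real.norm_eq_abs]
                exact add_le_add_left (hxle n) _
        exact h3.trans (by rw [hcn n]; exact le_abs_self _)
      have hc : ‖c‖ ≤ ε' * ‖a‖ + ‖a - b‖ := by
        have hceq : c = ε' • a + (WithLp.equiv p _).symm (fun n => |a n - b n|) := by
          refine PiLp.ext fun n => ?_
          rw [hcn n]
          rfl
        rw [hceq]
        calc ‖ε' • a + (WithLp.equiv p _).symm (fun n => |a n - b n|)‖
            ≤ ‖ε' • a‖ + ‖(WithLp.equiv p (Fin N → ℝ)).symm (fun n => |a n - b n|)‖ :=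
              norm_add_le _ _
          _ = ε' * ‖a‖ + ‖a - b‖ := by
              rw [norm_smul, Real.norm_eq_abs, abs_of_pos (by linarith : (0:ℝ) < ε')]
              congr 1
              refine PiLp.norm_eq_norm_of_forall _ _ fun n => ?_
              rw [PiLp.sub_apply]
              simp [Real.norm_eq_abs, abs_abs]
      have hfinal : ‖y - z‖ ≤ ε := by
        have h4 : ‖y - z‖ ≤ ε' * ‖a‖ + (1 - ‖a‖) + δ := by
          have := hyz.trans hc; linarith
        have h5 : ε' * ‖a‖ + (1 - ‖a‖) ≤ ε' := by nlinarith [norm_nonneg a]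
        linarith
      exact hfinal
  exact le_of_forall_gt_imp_ge_of_dense main
end

section
/- For 1 ≤ p < ∞ and any sequence (X_n) of Banach spaces, the thickness constant of Y = ℓ_p(X_n) satisfies T(Y) ≥ 2^{1/p}. -/
open scoped ENNReal NNReal

/-- `T(ℓ_p(X_n)) ≥ 2^{1/p}` for `1 ≤ p < ∞` and nonzero Banach spaces `X_n`. -/
theorem two_rpow_le_thickness_lp
    (p : ℝ≥0∞) [Fact (1 ≤ p)] (hp : p ≠ ⊤)
    (E : ℕ → Type*) [∀ n, NormedAddCommGroup (E n)] [∀ n, NormedSpace ℝ (E n)]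
    [∀ n, CompleteSpace (E n)] [∀ n, Nontrivial (E n)] :
    2 ^ (1 / p.toReal) ≤ thickness (lp E p) := by
  classical
  set q := p.toReal with hqdef
  have hq1 : 1 ≤ q := by
    have h1 := Fact.out (p := 1 ≤ p)
    simpa using ENNReal.toReal_mono hp h1
  have hq0 : 0 < q := lt_of_lt_of_le one_pos hq1
  -- a unit vector in `lp E p`
  obtain ⟨e₀, he₀⟩ := exists_norm_eq (E 0) (zero_le_one (α := ℝ))
  set x₀ : lp E p := lp.single p 0 e₀ with hx₀def
  have hx₀norm : ‖x₀‖ = 1 := by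
    have h := lp.norm_single (p := p) (lt_of_lt_of_le one_pos (Fact.out (p := 1 ≤ p))) 0 e₀
    simpa [he₀] using h
  apply le_csInf
  · refine ⟨2, two_pos, {x₀}, by simp [hx₀norm], fun y hy => ⟨x₀, Finset.mem_singleton_self _, ?_⟩⟩
    calc ‖y - x₀‖ ≤ ‖y‖ + ‖x₀‖ := norm_sub_le _ _
    _ ≤ 2 := by rw [hx₀norm]; linarith
  rintro ε ⟨hε, F, hF1, hF2⟩
  have key : ∀ δ : ℝ, δ ∈ Set.Ioo (0:ℝ) 1 → (1-δ)^q + 1 - δ^q ≤ ε^q := by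
    rintro δ ⟨hδ0, hδ1⟩
    have hev : ∀ᶠ n in Filter.atTop, ∀ x ∈ F, ‖x n‖ < δ := by
      rw [Filter.eventually_all_finset]
      intro x hx
      have hsum : Summable fun n => ‖x n‖ ^ q := (lp.memℓp x).summable hq0
      have h1 : Filter.Tendsto (fun n => ‖x n‖ ^ q) Filter.atTop (nhds 0) :=
        hsum.tendsto_atTop_zero
      have h2 : Filter.Tendsto (fun n => ‖x n‖) Filter.atTop (nhds 0) := by
        have hc : ContinuousAt (fun t : ℝ => t ^ q⁻¹) 0 :=
          Real.continuousAt_rpow_const 0 q⁻¹ (Or.inr (by positivity))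
        have h3 := hc.tendsto.comp h1
        rw [Real.zero_rpow (by positivity : q⁻¹ ≠ 0)] at h3
        have heq : ((fun t : ℝ => t ^ q⁻¹) ∘ fun n => ‖x n‖ ^ q) = fun n => ‖x n‖ := by
          funext n
          exact Real.rpow_rpow_inv (norm_nonneg _) hq0.ne'
        rwa [heq] at h3
      exact h2.eventually_lt_const hδ0
    obtain ⟨N, hN⟩ := hev.exists
    obtain ⟨e, he⟩ := exists_norm_eq (E N) (zero_le_one (α := ℝ))
    set y : lp E p := lp.single p N e with hydef
    have hynorm : ‖y‖ = 1 := by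
      have h := lp.norm_single (p := p) (lt_of_lt_of_le one_pos (Fact.out (p := 1 ≤ p))) N e
      simpa [he] using h
    obtain ⟨x, hxF, hxy⟩ := hF2 y (by rw [hynorm])
    have hxnorm : ‖x‖ = 1 := hF1 x hxF
    have hxn : ‖x N‖ < δ := hN x hxF
    have hxsum : ‖x‖ ^ q = ‖x N‖^q + ∑' n, if n = N then 0 else ‖x n‖^q := by
      rw [lp.norm_rpow_eq_tsum hq0, Summable.tsum_eq_add_tsum_ite ((lp.memℓp x).summable hq0) N]
    have hyx : ‖y - x‖ ^ q = ‖e - x N‖^q + ∑' n, if n = N then 0 else ‖x n‖^q := by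
      rw [lp.norm_rpow_eq_tsum hq0,
        Summable.tsum_eq_add_tsum_ite ((lp.memℓp (y - x)).summable hq0) N]
      congr 1
      · congr 1
        have : (y - x) N = e - x N := by
          rw [lp.coeFn_sub, Pi.sub_apply, hydef, lp.single_apply_self]
        rw [this]
      · apply tsum_congr; intro n
        by_cases h : n = N
        · simp [h]
        · have : (y - x) n = - x n := by
            rw [lp.coeFn_sub, Pi.sub_apply, hydef, lp.single_apply_ne p N e h, zero_sub]
          simp [h, this, hqdef]
    have hS : (∑' n, if n = N then 0 else ‖x n‖^q) = 1 - ‖x N‖^q := by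
      have h1 : (1:ℝ) = ‖x‖ ^ q := by rw [hxnorm, Real.one_rpow]
      rw [h1, hxsum]; ring
    have h1 : (1-δ)^q ≤ ‖e - x N‖^q := by
      apply Real.rpow_le_rpow (by linarith) _ hq0.le
      calc 1 - δ ≤ ‖e‖ - ‖x N‖ := by rw [he]; linarith
      _ ≤ ‖e - x N‖ := norm_sub_norm_le _ _
    have h2 : ‖x N‖^q ≤ δ^q := Real.rpow_le_rpow (norm_nonneg _) hxn.le hq0.le
    have h3 : ‖y - x‖^q ≤ ε^q := Real.rpow_le_rpow (norm_nonneg _) hxy hq0.le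
    rw [hyx, hS] at h3
    linarith
  have hlim : Filter.Tendsto (fun δ : ℝ => (1-δ)^q + 1 - δ^q)
      (nhdsWithin 0 (Set.Ioi 0)) (nhds 2) := by
    have hc1 : ContinuousAt (fun δ : ℝ => (1-δ)^q) 0 :=
      ContinuousAt.rpow_const (by fun_prop) (Or.inr hq0.le)
    have hc2 : ContinuousAt (fun δ : ℝ => δ^q) 0 :=
      continuousAt_id.rpow_const (Or.inr hq0.le)
    have hc : ContinuousAt (fun δ : ℝ => (1-δ)^q + 1 - δ^q) 0 :=
      (hc1.add continuousAt_const).sub hc2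
    have h := hc.tendsto
    have hval : ((1-(0:ℝ))^q + 1 - (0:ℝ)^q) = 2 := by
      rw [sub_zero, Real.one_rpow, Real.zero_rpow hq0.ne']; ring
    rw [hval] at h
    exact h.mono_left nhdsWithin_le_nhds
  have h2q : 2 ≤ ε^q := by
    refine le_of_tendsto hlim ?_
    filter_upwards [Ioo_mem_nhdsGT_of_mem (Set.mem_Ico.mpr ⟨le_refl (0:ℝ), one_pos⟩)] with δ hδ
    exact key δ hδ
  calc (2:ℝ) ^ (1/q) = 2 ^ q⁻¹ := by rw [one_div]
  _ ≤ (ε^q) ^ q⁻¹ := Real.rpow_le_rpow (by norm_num) h2q (by positivity)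
  _ = ε := Real.rpow_rpow_inv hε.le hq0.ne'
end

section
/- For 1 ≤ p < ∞ and any sequence (X_n) of Banach spaces, T(ℓ_p(X_n)) ≤ ( inf_n T(X_n)^p + 1 )^{1/p}. -/
open scoped ENNReal NNReal

/-- The defining set for the thickness constant. -/
def thickSet (X : Type*) [NormedAddCommGroup X] : Set ℝ :=
  {ε : ℝ | 0 < ε ∧ ∃ F : Finset X, (∀ x ∈ F, ‖x‖ = 1) ∧
    ∀ y : X, ‖y‖ ≤ 1 → ∃ x ∈ F, ‖y - x‖ ≤ ε}

lemma thickness_eq_sInf (X : Type*) [NormedAddCommGroup X] :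
    thickness X = sInf (thickSet X) := rfl

lemma thickSet_bddBelow (X : Type*) [NormedAddCommGroup X] : BddBelow (thickSet X) :=
  ⟨0, fun ε hε => hε.1.le⟩

lemma two_mem_thickSet (X : Type*) [NormedAddCommGroup X] [NormedSpace ℝ X] [Nontrivial X] :
    (2 : ℝ) ∈ thickSet X := by
  obtain ⟨x, hx⟩ := exists_norm_eq X (le_of_lt one_pos)
  refine ⟨two_pos, {x}, ?_, ?_⟩
  · intro z hz; simp only [Finset.mem_singleton] at hz; subst hz; exact hx
  · intro y hy
    refine ⟨x, Finset.mem_singleton_self x, ?_⟩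
    calc ‖y - x‖ ≤ ‖y‖ + ‖x‖ := norm_sub_le _ _
      _ ≤ 1 + 1 := by rw [hx]; linarith
      _ = 2 := by norm_num

lemma thickness_nonneg (X : Type*) [NormedAddCommGroup X] : 0 ≤ thickness X :=
  Real.sInf_nonneg (fun ε hε => hε.1.le)

/-- Key construction: from an `ε`-cover of the unit ball of `E n` by unit vectors, one gets a
`(ε^p+1)^{1/p}`-cover of the unit ball of `ℓ_p(E)` by unit vectors. -/
lemma lp_mem_thickSet
    (p : ℝ≥0∞) [Fact (1 ≤ p)] (hp : p ≠ ⊤)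
    (E : ℕ → Type*) [∀ n, NormedAddCommGroup (E n)] [∀ n, NormedSpace ℝ (E n)]
    (n : ℕ) {ε : ℝ} (hε : ε ∈ thickSet (E n)) :
    (ε ^ p.toReal + 1) ^ (1 / p.toReal) ∈ thickSet (lp E p) := by
  classical
  have hfact : (1 : ℝ≥0∞) ≤ p := Fact.out
  have hpt1 : 1 ≤ p.toReal := by
    rw [← ENNReal.toReal_one]
    exact ENNReal.toReal_mono hp hfact
  have hpt : 0 < p.toReal := lt_of_lt_of_le one_pos hpt1
  obtain ⟨hεpos, F, hF1, hF2⟩ := hε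
  have hnorm_single : ∀ x : E n, ‖(lp.single p n x : lp E p)‖ = ‖x‖ := by
    intro x
    have := lp.norm_single (E := E) (lt_of_lt_of_le one_pos hfact) n x
    simpa using this
  refine ⟨by positivity, F.image (fun x => lp.single p n x), ?_, ?_⟩
  · intro z hz
    simp only [Finset.mem_image] at hz
    obtain ⟨x, hxF, rfl⟩ := hz
    rw [hnorm_single]
    exact hF1 x hxF
  · intro y hy
    have hyn : ‖y n‖ ≤ 1 := le_trans (lp.norm_apply_le_norm (by
      intro h; rw [h] at hfact; exact absurd hfact (by simp)) y n) hy
    obtain ⟨x, hxF, hxy⟩ := hF2 (y n) hyn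
    refine ⟨lp.single p n x, Finset.mem_image_of_mem _ hxF, ?_⟩
    set s : lp E p := lp.single p n x with hs
    have hsum : Summable fun k => ‖(y - s) k‖ ^ p.toReal := (lp.memℓp (y - s)).summable hpt
    have hsumy : Summable fun k => ‖(y : ∀ k, E k) k‖ ^ p.toReal := (lp.memℓp y).summable hpt
    have hcoe : ∀ k, (y - s : lp E p) k = y k - s k := fun k => rfl
    have hsn : s n = x := lp.single_apply_self p n x
    have hsk : ∀ k, k ≠ n → s k = 0 := fun k hk => lp.single_apply_ne p n x hk
    have key : ‖y - s‖ ^ p.toReal ≤ ε ^ p.toReal + 1 := by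
      rw [lp.norm_rpow_eq_tsum hpt]
      rw [Summable.tsum_eq_add_tsum_ite hsum n]
      have h1 : ‖(y - s : lp E p) n‖ ^ p.toReal ≤ ε ^ p.toReal := by
        rw [hcoe, hsn]
        exact Real.rpow_le_rpow (norm_nonneg _) hxy hpt.le
      have h2 : (∑' k, if k = n then 0 else ‖(y - s : lp E p) k‖ ^ p.toReal) ≤ 1 := by
        have hle : ∀ k, (if k = n then 0 else ‖(y - s : lp E p) k‖ ^ p.toReal) ≤
            ‖(y : ∀ k, E k) k‖ ^ p.toReal := by
          intro k
          by_cases hk : k = n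
          · simp only [if_pos hk]; positivity
          · simp only [if_neg hk]
            rw [hcoe, hsk k hk, sub_zero]
        calc (∑' k, if k = n then 0 else ‖(y - s : lp E p) k‖ ^ p.toReal)
            ≤ ∑' k, ‖(y : ∀ k, E k) k‖ ^ p.toReal := by
              refine Summable.tsum_le_tsum hle ?_ hsumy
              refine Summable.of_nonneg_of_le (fun k => ?_) hle hsumy
              by_cases hk : k = n
              · simp [hk]
              · simp only [if_neg hk]; positivity
          _ = ‖y‖ ^ p.toReal := (lp.norm_rpow_eq_tsum hpt y).symm
          _ ≤ 1 := Real.rpow_le_one (lp.norm_nonneg' y) hy hpt.le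
      linarith
    calc ‖y - s‖ = (‖y - s‖ ^ p.toReal) ^ (1 / p.toReal) := by
          rw [one_div, Real.rpow_rpow_inv (norm_nonneg _) hpt.ne']
      _ ≤ (ε ^ p.toReal + 1) ^ (1 / p.toReal) := by
          apply Real.rpow_le_rpow (by positivity) key (by positivity)

/-- `T(ℓ_p(X_n)) ≤ (inf_n T(X_n)^p + 1)^{1/p}` for `1 ≤ p < ∞`. -/
theorem thickness_lp_le
    (p : ℝ≥0∞) [Fact (1 ≤ p)] (hp : p ≠ ⊤)
    (E : ℕ → Type*) [∀ n, NormedAddCommGroup (E n)] [∀ n, NormedSpace ℝ (E n)]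
    [∀ n, CompleteSpace (E n)] (hinf : ∀ n, ¬ FiniteDimensional ℝ (E n)) :
    thickness (lp E p) ≤ ((⨅ n, thickness (E n)) ^ p.toReal + 1) ^ (1 / p.toReal) := by
  have hfact : (1 : ℝ≥0∞) ≤ p := Fact.out
  have hpt1 : 1 ≤ p.toReal := by
    rw [← ENNReal.toReal_one]
    exact ENNReal.toReal_mono hp hfact
  have hpt : 0 < p.toReal := lt_of_lt_of_le one_pos hpt1
  have hnontriv : ∀ n, Nontrivial (E n) := by
    intro n
    by_contra h
    have : Subsingleton (E n) := not_nontrivial_iff_subsingleton.mp h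
    exact hinf n (Module.Finite.of_basis (Module.Basis.empty (ι := Empty) (E n)))
  set I := ⨅ n, thickness (E n) with hI
  have hIbdd : BddBelow (Set.range fun n => thickness (E n)) :=
    ⟨0, by rintro _ ⟨n, rfl⟩; exact thickness_nonneg (E n)⟩
  have hInonneg : 0 ≤ I := le_ciInf fun n => thickness_nonneg (E n)
  -- For every δ > 0, thickness (lp E p) ≤ ((I + δ)^pt + 1)^(1/pt)
  have hstep : ∀ δ : ℝ, 0 < δ →
      thickness (lp E p) ≤ ((I + δ) ^ p.toReal + 1) ^ (1 / p.toReal) := by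
    intro δ hδ
    obtain ⟨n, hn⟩ : ∃ n, thickness (E n) < I + δ / 2 := by
      apply exists_lt_of_ciInf_lt
      rw [← hI]; linarith
    have := hnontriv n
    have hSne : (thickSet (E n)).Nonempty := ⟨2, two_mem_thickSet (E n)⟩
    obtain ⟨ε, hεmem, hεlt⟩ := Real.lt_sInf_add_pos hSne (half_pos hδ)
    have hεI : ε < I + δ := by
      rw [← thickness_eq_sInf] at hεlt
      linarith
    have h1 : thickness (lp E p) ≤ (ε ^ p.toReal + 1) ^ (1 / p.toReal) :=
      csInf_le (thickSet_bddBelow _) (lp_mem_thickSet p hp E n hεmem)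
    refine h1.trans ?_
    apply Real.rpow_le_rpow (add_nonneg (Real.rpow_nonneg hεmem.1.le _) zero_le_one) ?_
      (by positivity)
    have : ε ^ p.toReal ≤ (I + δ) ^ p.toReal :=
      Real.rpow_le_rpow hεmem.1.le hεI.le hpt.le
    linarith
  -- take the limit δ → 0⁺
  have c1 : ContinuousAt (fun δ : ℝ => (I + δ) ^ p.toReal + 1) 0 :=
    (((continuous_const.add continuous_id).continuousAt (x := (0:ℝ))).rpow_const
      (Or.inr hpt.le)).add continuousAt_const
  have hcont : ContinuousAt (fun δ : ℝ => ((I + δ) ^ p.toReal + 1) ^ (1 / p.toReal)) 0 := by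
    refine c1.rpow_const (Or.inl ?_)
    simp only [add_zero]
    positivity
  have htend : Filter.Tendsto (fun δ : ℝ => ((I + δ) ^ p.toReal + 1) ^ (1 / p.toReal))
      (nhdsWithin 0 (Set.Ioi 0)) (nhds ((I ^ p.toReal + 1) ^ (1 / p.toReal))) := by
    have h := hcont.continuousWithinAt (s := Set.Ioi (0:ℝ))
    have h' : Filter.Tendsto (fun δ : ℝ => ((I + δ) ^ p.toReal + 1) ^ (1 / p.toReal))
        (nhdsWithin 0 (Set.Ioi 0))
        (nhds (((I + 0) ^ p.toReal + 1) ^ (1 / p.toReal))) := h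
    simpa only [add_zero] using h'
  exact ge_of_tendsto htend (Filter.eventually_of_mem self_mem_nhdsWithin
    (fun δ hδ => hstep δ hδ))
end

section
/- For any sequence (X_n) of infinite-dimensional Banach spaces, the thickness constant of the ℓ_∞-direct sum satisfies T(ℓ_∞(X_n)) = inf_n T(X_n). -/
open scoped ENNReal NNReal

lemma thickSet_bddBelow_s12 (X : Type*) [NormedAddCommGroup X] :
    BddBelow {ε : ℝ | 0 < ε ∧ ∃ F : Finset X, (∀ x ∈ F, ‖x‖ = 1) ∧
      ∀ y : X, ‖y‖ ≤ 1 → ∃ x ∈ F, ‖y - x‖ ≤ ε} :=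
  ⟨0, fun _ hε => hε.1.le⟩

lemma two_mem_thickSet_s12 {X : Type*} [NormedAddCommGroup X] {x : X} (hx : ‖x‖ = 1) :
    (2:ℝ) ∈ {ε : ℝ | 0 < ε ∧ ∃ F : Finset X, (∀ x ∈ F, ‖x‖ = 1) ∧
      ∀ y : X, ‖y‖ ≤ 1 → ∃ x ∈ F, ‖y - x‖ ≤ ε} := by
  refine ⟨two_pos, {x}, ?_, ?_⟩
  · simpa using hx
  · intro y hy
    refine ⟨x, Finset.mem_singleton_self x, ?_⟩
    calc ‖y - x‖ ≤ ‖y‖ + ‖x‖ := norm_sub_le _ _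
    _ ≤ 2 := by rw [hx]; linarith

lemma exists_unit {X : Type*} [NormedAddCommGroup X] [NormedSpace ℝ X]
    (h : ¬ FiniteDimensional ℝ X) : ∃ x : X, ‖x‖ = 1 := by
  have : Nontrivial X := by
    by_contra hc
    rw [not_nontrivial_iff_subsingleton] at hc
    exact h inferInstance
  exact exists_norm_eq X zero_le_one

lemma one_le_of_mem_thickSet {X : Type*} [NormedAddCommGroup X] [NormedSpace ℝ X]
    [CompleteSpace X] (h : ¬ FiniteDimensional ℝ X) {ε : ℝ}
    (hε : ε ∈ {ε : ℝ | 0 < ε ∧ ∃ F : Finset X, (∀ x ∈ F, ‖x‖ = 1) ∧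
      ∀ y : X, ‖y‖ ≤ 1 → ∃ x ∈ F, ‖y - x‖ ≤ ε}) : 1 ≤ ε := by
  obtain ⟨hε0, F, hFunit, hFcov⟩ := hε
  have key : ∀ r : ℝ, r < 1 → r ≤ ε := by
    intro r hr
    set V : Subspace ℝ X := Submodule.span ℝ (F : Set X) with hV
    have hVfd : FiniteDimensional ℝ V := FiniteDimensional.span_of_finite ℝ F.finite_toSet
    have hVclosed : IsClosed (V : Set X) := Submodule.closed_of_finiteDimensional V
    have hVne : ∃ x : X, x ∉ V := by
      by_contra hc
      push_neg at hc
      have htop : V = ⊤ := eq_top_iff.2 fun x _ => hc x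
      exact h (Module.Finite.equiv (LinearEquiv.ofTop V htop))
    obtain ⟨x₀, hx₀V, hx₀⟩ := riesz_lemma hVclosed hVne hr
    have hx₀ne : x₀ ≠ 0 := fun h0 => hx₀V (h0 ▸ V.zero_mem)
    have hx₀pos : 0 < ‖x₀‖ := norm_pos_iff.2 hx₀ne
    set x : X := ‖x₀‖⁻¹ • x₀ with hxdef
    have hx1 : ‖x‖ = 1 := by
      rw [hxdef, norm_smul, norm_inv, norm_norm, inv_mul_cancel₀ hx₀pos.ne']
    obtain ⟨c, hcF, hc⟩ := hFcov x hx1.le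
    have hcV : (‖x₀‖ : ℝ) • c ∈ V := V.smul_mem _ (Submodule.subset_span hcF)
    have h1 : r * ‖x₀‖ ≤ ‖x₀ - ‖x₀‖ • c‖ := hx₀ _ hcV
    have h2 : ‖x₀ - ‖x₀‖ • c‖ = ‖x₀‖ * ‖x - c‖ := by
      rw [← norm_norm x₀, ← norm_smul, smul_sub, hxdef, smul_inv_smul₀ hx₀pos.ne', norm_norm]
    rw [h2] at h1
    have := mul_le_mul_of_nonneg_left hc (le_of_lt hx₀pos)
    nlinarith
  by_contra hlt
  push_neg at hlt
  have := key ((1+ε)/2) (by linarith)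
  linarith

lemma norm_single_top {E : ℕ → Type*} [∀ n, NormedAddCommGroup (E n)]
    (n : ℕ) (x : E n) : ‖lp.single ⊤ n x‖ = ‖x‖ := by
  refine le_antisymm ?_ ?_
  · refine lp.norm_le_of_forall_le (norm_nonneg x) fun j => ?_
    by_cases hj : j = n
    · subst hj; rw [lp.single_apply_self]
    · rw [lp.single_apply_ne _ _ _ hj]; simp [norm_nonneg]
  · have := lp.norm_apply_le_norm ENNReal.top_ne_zero (lp.single ⊤ n x) n
    rwa [lp.single_apply_self] at this

/-- `T(ℓ_∞(X_n)) = inf_n T(X_n)` for infinite-dimensional Banach spaces `X_n`. -/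
theorem thickness_lp_top
    (E : ℕ → Type*) [∀ n, NormedAddCommGroup (E n)] [∀ n, NormedSpace ℝ (E n)]
    [∀ n, CompleteSpace (E n)] (hinf : ∀ n, ¬ FiniteDimensional ℝ (E n)) :
    thickness (lp E ⊤) = ⨅ n, thickness (E n) := by
  classical
  obtain ⟨x₀, hx₀⟩ := exists_unit (hinf 0)
  have hz₀ : ‖lp.single (E := E) ⊤ 0 x₀‖ = 1 := by rw [norm_single_top, hx₀]
  have hbddiInf : BddBelow (Set.range fun n => thickness (E n)) := by
    refine ⟨0, ?_⟩
    rintro r ⟨n, rfl⟩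
    exact Real.sInf_nonneg fun x hx => hx.1.le
  refine le_antisymm ?_ ?_
  · -- thickness (lp E ⊤) ≤ ⨅ n, thickness (E n)
    refine le_ciInf fun n => ?_
    refine le_csInf ⟨2, two_mem_thickSet_s12 (exists_unit (hinf n)).choose_spec⟩ ?_
    rintro ε hε
    obtain ⟨hε0, F, hFunit, hFcov⟩ := hε
    have hε1 : 1 ≤ ε := one_le_of_mem_thickSet (hinf n) ⟨hε0, F, hFunit, hFcov⟩
    refine csInf_le (thickSet_bddBelow_s12 _) ?_
    refine ⟨hε0, F.image (fun x => lp.single ⊤ n x), ?_, ?_⟩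
    · intro z hz
      obtain ⟨x, hxF, rfl⟩ := Finset.mem_image.1 hz
      rw [norm_single_top, hFunit x hxF]
    · intro y hy
      obtain ⟨x, hxF, hx⟩ :=
        hFcov (y n) (le_trans (lp.norm_apply_le_norm ENNReal.top_ne_zero y n) hy)
      refine ⟨lp.single ⊤ n x, Finset.mem_image_of_mem _ hxF, ?_⟩
      refine lp.norm_le_of_forall_le (le_trans zero_le_one hε1) fun j => ?_
      rw [lp.coeFn_sub, Pi.sub_apply]
      by_cases hj : j = n
      · subst hj; rw [lp.single_apply_self]; exact hx
      · rw [lp.single_apply_ne _ _ _ hj, sub_zero]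
        exact le_trans (le_trans (lp.norm_apply_le_norm ENNReal.top_ne_zero y j) hy) hε1
  · -- ⨅ n, thickness (E n) ≤ thickness (lp E ⊤)
    set t := ⨅ n, thickness (E n) with ht
    refine le_csInf ⟨2, two_mem_thickSet_s12 hz₀⟩ ?_
    rintro ε hε
    obtain ⟨hε0, F, hFunit, hFcov⟩ := hε
    by_contra hlt
    push_neg at hlt
    set δ : ℝ := (t - ε)/2 with hδ
    have hδ0 : 0 < δ := by rw [hδ]; linarith
    have ht2 : t ≤ 2 := by
      refine le_trans (ciInf_le hbddiInf 0) ?_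
      exact csInf_le (thickSet_bddBelow_s12 _) (two_mem_thickSet_s12 hx₀)
    have hδ1 : δ < 1 := by rw [hδ]; linarith
    have hbig : ∀ z : lp E ⊤, z ∈ F → ∃ k : ℕ, 1 - δ < ‖(z : ∀ i, E i) k‖ := by
      intro z hz
      have hz1 : 1 - δ < ‖z‖ := by rw [hFunit z hz]; linarith
      rw [lp.norm_eq_ciSup] at hz1
      exact (lt_ciSup_iff (memℓp_infty_iff.1 (lp.memℓp z))).1 hz1
    choose! kz hkz using hbig
    have hunitk : ∀ k : ℕ, ∃ w : E k, ‖w‖ = 1 := fun k => exists_unit (hinf k)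
    choose w hw using hunitk
    set G : ∀ k : ℕ, Finset (E k) := fun k =>
      F.image (fun z => if kz z = k then ‖(z : ∀ i, E i) k‖⁻¹ • (z : ∀ i, E i) k else w k)
      with hGdef
    have hGunit : ∀ k : ℕ, ∀ x ∈ G k, ‖x‖ = 1 := by
      intro k x hx
      obtain ⟨z, hzF, rfl⟩ := Finset.mem_image.1 hx
      by_cases h : kz z = k
      · subst h
        rw [if_pos rfl]
        have h1 : 1 - δ < ‖(z : ∀ i, E i) (kz z)‖ := hkz z hzF
        have h2 : (0:ℝ) < ‖(z : ∀ i, E i) (kz z)‖ := by linarith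
        rw [norm_smul, norm_inv, norm_norm, inv_mul_cancel₀ h2.ne']
      · rw [if_neg h]
        exact hw k
    have hnot : ∀ k : ℕ, ∃ y : E k, ‖y‖ ≤ 1 ∧ ∀ x ∈ G k, ε + δ < ‖y - x‖ := by
      intro k
      have h1 : ε + δ < thickness (E k) := by
        have h2 : ε + δ < t := by rw [hδ]; linarith
        exact lt_of_lt_of_le h2 (ciInf_le hbddiInf k)
      have h2 : (ε + δ) ∉ {ε : ℝ | 0 < ε ∧ ∃ F : Finset (E k), (∀ x ∈ F, ‖x‖ = 1) ∧
          ∀ y : E k, ‖y‖ ≤ 1 → ∃ x ∈ F, ‖y - x‖ ≤ ε} := by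
        intro hmem
        exact absurd (csInf_le (thickSet_bddBelow_s12 _) hmem) (not_le.2 h1)
      by_contra hc
      push_neg at hc
      refine h2 ⟨by linarith, G k, hGunit k, ?_⟩
      intro y hy
      obtain ⟨x, hxG, hx⟩ := hc y hy
      exact ⟨x, hxG, hx⟩
    choose y hy1 hy2 using hnot
    have hymem : Memℓp y ⊤ := memℓp_infty ⟨1, by rintro r ⟨i, rfl⟩; exact hy1 i⟩
    set Y : lp E ⊤ := ⟨y, hymem⟩ with hYdef
    have hYnorm : ‖Y‖ ≤ 1 := lp.norm_le_of_forall_le zero_le_one (fun i => hy1 i)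
    obtain ⟨z, hzF, hzclose⟩ := hFcov Y hYnorm
    have huG : ‖(z : ∀ i, E i) (kz z)‖⁻¹ • (z : ∀ i, E i) (kz z) ∈ G (kz z) := by
      refine Finset.mem_image.2 ⟨z, hzF, ?_⟩
      rw [if_pos rfl]
    have h3 : ε + δ < ‖y (kz z) - ‖(z : ∀ i, E i) (kz z)‖⁻¹ • (z : ∀ i, E i) (kz z)‖ :=
      hy2 (kz z) _ huG
    have h4 : ‖y (kz z) - (z : ∀ i, E i) (kz z)‖ ≤ ε := by
      have h := lp.norm_apply_le_norm ENNReal.top_ne_zero (Y - z) (kz z)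
      rw [lp.coeFn_sub, Pi.sub_apply] at h
      exact h.trans hzclose
    have hzknorm : 1 - δ < ‖(z : ∀ i, E i) (kz z)‖ := hkz z hzF
    have hzkpos : (0:ℝ) < ‖(z : ∀ i, E i) (kz z)‖ := by linarith
    have hzkle : ‖(z : ∀ i, E i) (kz z)‖ ≤ 1 := by
      have h := lp.norm_apply_le_norm ENNReal.top_ne_zero z (kz z)
      rwa [hFunit z hzF] at h
    have h5 : ‖(z : ∀ i, E i) (kz z) - ‖(z : ∀ i, E i) (kz z)‖⁻¹ • (z : ∀ i, E i) (kz z)‖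
        = 1 - ‖(z : ∀ i, E i) (kz z)‖ := by
      have heq : (z : ∀ i, E i) (kz z) - ‖(z : ∀ i, E i) (kz z)‖⁻¹ • (z : ∀ i, E i) (kz z)
          = (1 - ‖(z : ∀ i, E i) (kz z)‖⁻¹) • (z : ∀ i, E i) (kz z) := by
        rw [sub_smul, one_smul]
      rw [heq, norm_smul, Real.norm_eq_abs,
        abs_of_nonpos (by
          have : (1:ℝ) ≤ ‖(z : ∀ i, E i) (kz z)‖⁻¹ := (one_le_inv₀ hzkpos).2 hzkle
          linarith)]
      field_simp
      ring
    have htri : ‖y (kz z) - ‖(z : ∀ i, E i) (kz z)‖⁻¹ • (z : ∀ i, E i) (kz z)‖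
        ≤ ‖y (kz z) - (z : ∀ i, E i) (kz z)‖
          + ‖(z : ∀ i, E i) (kz z) - ‖(z : ∀ i, E i) (kz z)‖⁻¹ • (z : ∀ i, E i) (kz z)‖ :=
      norm_sub_le_norm_sub_add_norm_sub _ _ _
    linarith
end

section
/- The thickness constant of Z = ℓ_1 ⊕_2 ℓ_1 equals √(2 + √2); in particular T(Z) < 2 while T(ℓ_1) = 2, so T(X ⊕_p Y) can be strictly less than min{T(X), T(Y)}. -/
open scoped ENNReal NNReal

/-- The real space `ℓ_1`. -/
noncomputable abbrev ellOne := lp (fun _ : ℕ => ℝ) 1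

section aux

lemma ellOne_hasSum (f : ellOne) : HasSum (fun n => ‖f n‖) ‖f‖ := by
  have h : (0:ℝ) < (1 : ℝ≥0∞).toReal := by norm_num
  simpa using lp.hasSum_norm h f

lemma ellOne_norm_single (a : ℝ) (N : ℕ) :
    ‖(lp.single 1 N a : ellOne)‖ = |a| := by
  have h : (0:ℝ) < (1 : ℝ≥0∞).toReal := by norm_num
  simpa using lp.norm_single (E := fun _ : ℕ => ℝ) h (fun _ => a) N

/-- key ℓ₁ estimate: the distance from `a·e_N` to `f` is nearly `|a| + ‖f‖`
if `f` has small `N`-th coordinate. -/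
lemma ellOne_single_sub_ge (f : ellOne) (a : ℝ) (N : ℕ) :
    |a| + ‖f‖ - 2 * ‖f N‖ ≤ ‖(lp.single 1 N a : ellOne) - f‖ := by
  classical
  set g : ellOne := (lp.single 1 N a : ellOne) - f with hg
  have hsg := ellOne_hasSum g
  have hsf := ellOne_hasSum f
  have hgsum : ‖g‖ = ‖g N‖ + ∑' n, ite (n = N) 0 ‖g n‖ := by
    rw [← hsg.tsum_eq]
    exact Summable.tsum_eq_add_tsum_ite hsg.summable N
  have hfsum : ‖f‖ = ‖f N‖ + ∑' n, ite (n = N) 0 ‖f n‖ := by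
    rw [← hsf.tsum_eq]
    exact Summable.tsum_eq_add_tsum_ite hsf.summable N
  have hcongr : (fun n => ite (n = N) 0 ‖g n‖) = fun n => ite (n = N) 0 ‖f n‖ := by
    funext n
    by_cases hn : n = N
    · simp [hn]
    · have : g n = -f n := by
        have h0 : (lp.single 1 N a : ellOne) n = 0 := lp.single_apply_ne (E := fun _ : ℕ => ℝ) 1 N a hn
        simp [hg, h0, hn]
      simp [hn, this]
  have hgN : (lp.single 1 N a : ellOne) N = a := lp.single_apply_self (E := fun _ : ℕ => ℝ) 1 N a
  have hgNval : g N = a - f N := by simp [hg, hgN]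
  have habs : |a| - ‖f N‖ ≤ ‖g N‖ := by
    rw [hgNval]
    have := abs_sub_abs_le_abs_sub a (f N)
    simpa [Real.norm_eq_abs] using this
  rw [hcongr] at hgsum
  linarith [hgsum, hfsum]

lemma small_coord_exists_prod (F : Finset (WithLp 2 (ellOne × ellOne))) {δ : ℝ} (hδ : 0 < δ) :
    ∃ N : ℕ, ∀ x ∈ F, ‖x.fst N‖ < δ ∧ ‖x.snd N‖ < δ := by
  have h : ∀ᶠ N in Filter.atTop, ∀ x ∈ F, ‖x.fst N‖ < δ ∧ ‖x.snd N‖ < δ := by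
    rw [Finset.eventually_all]
    intro x _
    have h1 : Filter.Tendsto (fun n => ‖x.fst n‖) Filter.atTop (nhds 0) :=
      (ellOne_hasSum x.fst).summable.tendsto_atTop_zero
    have h2 : Filter.Tendsto (fun n => ‖x.snd n‖) Filter.atTop (nhds 0) :=
      (ellOne_hasSum x.snd).summable.tendsto_atTop_zero
    exact (h1.eventually (eventually_lt_nhds hδ)).and (h2.eventually (eventually_lt_nhds hδ))
  exact h.exists

lemma small_coord_exists (F : Finset ellOne) {δ : ℝ} (hδ : 0 < δ) :
    ∃ N : ℕ, ∀ x ∈ F, ‖x N‖ < δ := by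
  have h : ∀ᶠ N in Filter.atTop, ∀ x ∈ F, ‖x N‖ < δ := by
    rw [Finset.eventually_all]
    intro x _
    exact (ellOne_hasSum x).summable.tendsto_atTop_zero.eventually (eventually_lt_nhds hδ)
  exact h.exists

/-- Thickness of ℓ₁ is 2. -/
lemma thickness_ellOne : thickness ellOne = 2 := by
  classical
  have hbdd : BddBelow {ε : ℝ | 0 < ε ∧ ∃ F : Finset ellOne, (∀ x ∈ F, ‖x‖ = 1) ∧
      ∀ y : ellOne, ‖y‖ ≤ 1 → ∃ x ∈ F, ‖y - x‖ ≤ ε} :=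
    ⟨0, fun x hx => hx.1.le⟩
  have hmem : (2 : ℝ) ∈ {ε : ℝ | 0 < ε ∧ ∃ F : Finset ellOne, (∀ x ∈ F, ‖x‖ = 1) ∧
      ∀ y : ellOne, ‖y‖ ≤ 1 → ∃ x ∈ F, ‖y - x‖ ≤ ε} := by
    refine ⟨by norm_num, {(lp.single 1 0 1 : ellOne)}, ?_, ?_⟩
    · intro x hx
      simp only [Finset.mem_singleton] at hx
      rw [hx, ellOne_norm_single]; norm_num
    · intro y hy
      refine ⟨(lp.single 1 0 1 : ellOne), Finset.mem_singleton_self _, ?_⟩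
      have h1 : ‖(lp.single 1 0 1 : ellOne)‖ = 1 := by rw [ellOne_norm_single]; norm_num
      calc ‖y - lp.single 1 0 1‖ ≤ ‖y‖ + ‖(lp.single 1 0 1 : ellOne)‖ := norm_sub_le _ _
        _ ≤ 2 := by rw [h1]; linarith
  apply le_antisymm
  · exact csInf_le hbdd hmem
  · apply le_csInf ⟨2, hmem⟩
    rintro ε ⟨hε, F, hF1, hFcov⟩
    apply le_of_forall_sub_le
    intro δ hδ
    obtain ⟨N, hN⟩ := small_coord_exists F (half_pos hδ)
    obtain ⟨x, hxF, hx⟩ := hFcov (lp.single 1 N 1) (by rw [ellOne_norm_single]; norm_num)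
    have hkey := ellOne_single_sub_ge x 1 N
    have hx1 := hF1 x hxF
    have hxN := hN x hxF
    have : |(1:ℝ)| = 1 := abs_one
    linarith

end aux

section prodaux

local notation "Z" => WithLp 2 (ellOne × ellOne)

lemma Z_norm_sq (z : Z) : ‖z‖ ^ 2 = ‖z.fst‖ ^ 2 + ‖z.snd‖ ^ 2 :=
  WithLp.prod_norm_sq_eq_of_L2 _

noncomputable def zc (u v : ellOne) : Z := (WithLp.equiv 2 (ellOne × ellOne)).symm (u, v)

lemma zc_fst (u v : ellOne) : (zc u v).fst = u := rfl
lemma zc_snd (u v : ellOne) : (zc u v).snd = v := rfl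

lemma Z_mem : Real.sqrt (2 + Real.sqrt 2) ∈ {ε : ℝ | 0 < ε ∧ ∃ F : Finset Z,
    (∀ x ∈ F, ‖x‖ = 1) ∧ ∀ y : Z, ‖y‖ ≤ 1 → ∃ x ∈ F, ‖y - x‖ ≤ ε} := by
  classical
  have h2 : (0:ℝ) ≤ Real.sqrt 2 := Real.sqrt_nonneg 2
  have hpos : (0:ℝ) < 2 + Real.sqrt 2 := by linarith
  refine ⟨Real.sqrt_pos.2 hpos, {zc (lp.single 1 0 1) 0, zc 0 (lp.single 1 0 1)}, ?_, ?_⟩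
  · intro x hx
    have hs : ‖(lp.single 1 0 1 : ellOne)‖ = 1 := by rw [ellOne_norm_single]; norm_num
    have h1 : ‖zc (lp.single 1 0 1) 0‖ = 1 := by
      have := Z_norm_sq (zc (lp.single 1 0 1) 0)
      rw [zc_fst, zc_snd, hs, norm_zero] at this
      nlinarith [norm_nonneg (zc (lp.single 1 0 1) (0 : ellOne))]
    have h2' : ‖zc 0 (lp.single 1 0 1)‖ = 1 := by
      have := Z_norm_sq (zc 0 (lp.single 1 0 1))
      rw [zc_fst, zc_snd, hs, norm_zero] at this
      nlinarith [norm_nonneg (zc (0 : ellOne) (lp.single 1 0 1))]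
    simp only [Finset.mem_insert, Finset.mem_singleton] at hx
    rcases hx with h | h <;> rw [h] <;> assumption
  · intro y hy
    set a := ‖y.fst‖ with ha
    set b := ‖y.snd‖ with hb
    have hab : a ^ 2 + b ^ 2 ≤ 1 := by
      have h := Z_norm_sq y
      nlinarith [norm_nonneg y]
    have hs : ‖(lp.single 1 0 1 : ellOne)‖ = 1 := by rw [ellOne_norm_single]; norm_num
    have key : ∀ c : Z, ‖y.fst - c.fst‖ ^ 2 + ‖y.snd - c.snd‖ ^ 2 ≤ 2 + Real.sqrt 2 →
        ‖y - c‖ ≤ Real.sqrt (2 + Real.sqrt 2) := by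
      intro c hc
      rw [show ‖y - c‖ = Real.sqrt (‖y - c‖ ^ 2) from
        (Real.sqrt_sq (norm_nonneg _)).symm]
      apply Real.sqrt_le_sqrt
      rw [Z_norm_sq, WithLp.sub_fst, WithLp.sub_snd]
      exact hc
    rcases le_total a b with hmin | hmin
    · refine ⟨zc (lp.single 1 0 1) 0, by simp, ?_⟩
      apply key
      rw [zc_fst, zc_snd, sub_zero]
      have h1 : ‖y.fst - lp.single 1 0 1‖ ≤ a + 1 := by
        calc ‖y.fst - lp.single 1 0 1‖ ≤ ‖y.fst‖ + ‖(lp.single 1 0 1 : ellOne)‖ := norm_sub_le _ _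
          _ = a + 1 := by rw [hs, ha]
      have h2a : 2 * a ≤ Real.sqrt 2 := by
        have ha0 : 0 ≤ a := norm_nonneg _
        have : (2*a)^2 ≤ 2 := by nlinarith
        nlinarith [Real.sq_sqrt (by norm_num : (0:ℝ) ≤ 2), Real.sqrt_nonneg 2,
          sq_nonneg (2*a - Real.sqrt 2)]
      nlinarith [norm_nonneg (y.fst - (lp.single 1 0 1 : ellOne)), norm_nonneg y.snd,
        sq_nonneg (a + 1)]
    · refine ⟨zc 0 (lp.single 1 0 1), by simp, ?_⟩
      apply key
      rw [zc_fst, zc_snd, sub_zero]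
      have h1 : ‖y.snd - lp.single 1 0 1‖ ≤ b + 1 := by
        calc ‖y.snd - lp.single 1 0 1‖ ≤ ‖y.snd‖ + ‖(lp.single 1 0 1 : ellOne)‖ := norm_sub_le _ _
          _ = b + 1 := by rw [hs, hb]
      have h2b : 2 * b ≤ Real.sqrt 2 := by
        have hb0 : 0 ≤ b := norm_nonneg _
        have : (2*b)^2 ≤ 2 := by nlinarith
        nlinarith [Real.sq_sqrt (by norm_num : (0:ℝ) ≤ 2), Real.sqrt_nonneg 2,
          sq_nonneg (2*b - Real.sqrt 2)]
      nlinarith [norm_nonneg (y.snd - (lp.single 1 0 1 : ellOne)), norm_nonneg y.fst,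
        sq_nonneg (b + 1)]

lemma Z_arith {s p q δ ε A B : ℝ} (hs2 : s^2 = 2) (hs0 : 0 ≤ s)
    (hp0 : 0 ≤ p) (hq0 : 0 ≤ q) (hpq : p^2 + q^2 = 1)
    (hδ : 0 < δ) (hδle : δ ≤ 1/8)
    (h1 : s/2 + p - 2*δ ≤ A) (h2 : s/2 + q - 2*δ ≤ B)
    (hAB : A^2 + B^2 ≤ ε^2) : 2 + s - 16*δ ≤ ε^2 := by
  have hs1 : 1 ≤ s := by nlinarith
  have hs2' : s ≤ 2 := by nlinarith
  have hp1 : p ≤ 1 := by nlinarith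
  have hq1 : q ≤ 1 := by nlinarith
  have h1pos : 0 ≤ s/2 + p - 2*δ := by linarith
  have h2pos : 0 ≤ s/2 + q - 2*δ := by linarith
  have hA : (s/2 + p - 2*δ)^2 ≤ A^2 := by nlinarith
  have hB : (s/2 + q - 2*δ)^2 ≤ B^2 := by nlinarith
  have e1 : (s/2 + p - 2*δ)^2 + (s/2 + q - 2*δ)^2 =
      s^2/2 + (p^2 + q^2) + (s*p + s*q) - 4*(δ*s) - 4*(δ*p) - 4*(δ*q) + 8*δ^2 := by ring
  have t0 : s*p^2 + s*q^2 = s := by linear_combination s * hpq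
  linarith [e1, t0, mul_nonneg (mul_nonneg hs0 hp0) (sub_nonneg.2 hp1),
    mul_nonneg (mul_nonneg hs0 hq0) (sub_nonneg.2 hq1),
    mul_nonneg hδ.le (sub_nonneg.2 hs2'), mul_nonneg hδ.le (sub_nonneg.2 hp1),
    mul_nonneg hδ.le (sub_nonneg.2 hq1), sq_nonneg δ]

lemma Z_lower {ε : ℝ} (hε : ε ∈ {ε : ℝ | 0 < ε ∧ ∃ F : Finset Z,
    (∀ x ∈ F, ‖x‖ = 1) ∧ ∀ y : Z, ‖y‖ ≤ 1 → ∃ x ∈ F, ‖y - x‖ ≤ ε}) :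
    Real.sqrt (2 + Real.sqrt 2) ≤ ε := by
  obtain ⟨hεpos, F, hF1, hFcov⟩ := hε
  have hs2 : Real.sqrt 2 ^ 2 = 2 := Real.sq_sqrt (by norm_num)
  have hs0 : (0:ℝ) ≤ Real.sqrt 2 := Real.sqrt_nonneg 2
  have hs1 : (1:ℝ) ≤ Real.sqrt 2 := by nlinarith
  have hs2' : Real.sqrt 2 ≤ 2 := by nlinarith
  have main : 2 + Real.sqrt 2 ≤ ε ^ 2 := by
    apply le_of_forall_sub_le
    intro η hη
    set δ := min (η / 16) (1/8) with hδdef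
    have hδpos : 0 < δ := lt_min (by linarith) (by norm_num)
    have hδle : δ ≤ 1/8 := min_le_right _ _
    have hδη : 16 * δ ≤ η := by
      have := min_le_left (η/16) (1/8)
      calc 16 * δ ≤ 16 * (η/16) := by linarith
        _ = η := by ring
    obtain ⟨N, hN⟩ := small_coord_exists_prod F hδpos
    set a : ℝ := Real.sqrt 2 / 2 with hadef
    have ha2 : a ^ 2 = 1/2 := by rw [hadef]; rw [div_pow, hs2]; norm_num
    have ha0 : 0 ≤ a := by positivity
    have haval : 1/2 ≤ a := by nlinarith
    have hsingle : ‖(lp.single 1 N a : ellOne)‖ = a := by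
      rw [ellOne_norm_single, abs_of_nonneg ha0]
    let y : Z := zc (lp.single 1 N a) (lp.single 1 N a)
    have hy1 : y.fst = (lp.single 1 N a : ellOne) := rfl
    have hy2 : y.snd = (lp.single 1 N a : ellOne) := rfl
    have hynorm : ‖y‖ = 1 := by
      have h := Z_norm_sq y
      rw [hy1, hy2, hsingle, ha2] at h
      have h' : ‖y‖ ^ 2 = 1 := by rw [h]; norm_num
      calc ‖y‖ = Real.sqrt (‖y‖ ^ 2) := (Real.sqrt_sq (norm_nonneg y)).symm
        _ = 1 := by rw [h', Real.sqrt_one]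
    obtain ⟨x, hxF, hx⟩ := hFcov y (le_of_eq hynorm)
    have hpq : ‖x.fst‖ ^ 2 + ‖x.snd‖ ^ 2 = 1 := by
      have h := Z_norm_sq x
      rw [hF1 x hxF, one_pow] at h
      linarith
    obtain ⟨hxN1, hxN2⟩ := hN x hxF
    -- coordinate-wise lower bounds
    have hfst : (y - x).fst = (lp.single 1 N a : ellOne) - x.fst := by
      rw [WithLp.sub_fst, hy1]
    have hsnd : (y - x).snd = (lp.single 1 N a : ellOne) - x.snd := by
      rw [WithLp.sub_snd, hy2]
    have h1 : Real.sqrt 2 / 2 + ‖x.fst‖ - 2 * δ ≤ ‖(y - x).fst‖ := by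
      rw [hfst]
      have := ellOne_single_sub_ge x.fst a N
      rw [abs_of_nonneg ha0] at this
      rw [← hadef]
      linarith
    have h2 : Real.sqrt 2 / 2 + ‖x.snd‖ - 2 * δ ≤ ‖(y - x).snd‖ := by
      rw [hsnd]
      have := ellOne_single_sub_ge x.snd a N
      rw [abs_of_nonneg ha0] at this
      rw [← hadef]
      linarith
    have hεsq : ‖(y - x).fst‖ ^ 2 + ‖(y - x).snd‖ ^ 2 ≤ ε ^ 2 := by
      rw [← Z_norm_sq (y - x)]
      exact pow_le_pow_left₀ (norm_nonneg _) hx 2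
    have := Z_arith hs2 hs0 (norm_nonneg x.fst) (norm_nonneg x.snd) hpq hδpos hδle h1 h2 hεsq
    linarith
  calc Real.sqrt (2 + Real.sqrt 2) ≤ Real.sqrt (ε ^ 2) := Real.sqrt_le_sqrt main
    _ = ε := Real.sqrt_sq hεpos.le

lemma thickness_Z : thickness (WithLp 2 (ellOne × ellOne)) = Real.sqrt (2 + Real.sqrt 2) := by
  apply le_antisymm
  · exact csInf_le ⟨0, fun x hx => hx.1.le⟩ Z_mem
  · exact le_csInf ⟨_, Z_mem⟩ fun ε hε => Z_lower hε

end prodaux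

/-- `T(ℓ_1 ⊕_2 ℓ_1) = √(2 + √2) < 2`, while `T(ℓ_1) = 2`, so the thickness of a
product can fall strictly below the minimum of the thicknesses of the factors. -/
theorem thickness_l1_sum2_l1 :
    thickness (WithLp 2 (ellOne × ellOne)) = Real.sqrt (2 + Real.sqrt 2) ∧
    thickness (WithLp 2 (ellOne × ellOne)) < 2 ∧
    thickness ellOne = 2 := by
  refine ⟨thickness_Z, ?_, thickness_ellOne⟩
  rw [thickness_Z]
  rw [Real.sqrt_lt' (by norm_num)]
  nlinarith [Real.sq_sqrt (by norm_num : (0:ℝ) ≤ 2), Real.sqrt_nonneg 2]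
end

section
/- For real numbers a, b ≥ 0 with a² + b² = 1 and z = (x, y) ∈ ℓ_1 ⊕_2 ℓ_1 with ‖x‖_1 = a, ‖y‖_1 = b, the four points z_1=(e_1,0), z_2=(−e_1,0), z_3=(0,e_1), z_4=(0,−e_1) satisfy min_{i} ‖z − z_i‖² ≤ 2 + a + b ≤ 2 + √2. -/
open scoped ENNReal

/-- The first coordinate vector of `ℓ_1`. -/
noncomputable def e₁ : ellOne := lp.single 1 0 (1 : ℝ)

lemma norm_e₁ : ‖e₁‖ = 1 := by
  have := lp.norm_single (p := (1 : ℝ≥0∞)) (E := fun _ : ℕ => ℝ) (by norm_num)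
    0 (1 : ℝ)
  simpa [e₁] using this

/-- for `z = (x,y) ∈ ℓ_1 ⊕_2 ℓ_1` with `‖x‖_1 = a`, `‖y‖_1 = b`,
`a² + b² = 1`, the four points `(±e₁,0)`, `(0,±e₁)` satisfy
`min_i ‖z − z_i‖² ≤ 2 + a + b ≤ 2 + √2`. -/
theorem min_dist_sq_le_two_add
    (a b : ℝ) (ha : 0 ≤ a) (hb : 0 ≤ b) (hab : a ^ 2 + b ^ 2 = 1)
    (z : WithLp 2 (ellOne × ellOne))
    (hx : ‖(WithLp.equiv 2 (ellOne × ellOne) z).1‖ = a)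
    (hy : ‖(WithLp.equiv 2 (ellOne × ellOne) z).2‖ = b) :
    min
      (min (‖z - (WithLp.equiv 2 (ellOne × ellOne)).symm (e₁, 0)‖ ^ 2)
           (‖z - (WithLp.equiv 2 (ellOne × ellOne)).symm (-e₁, 0)‖ ^ 2))
      (min (‖z - (WithLp.equiv 2 (ellOne × ellOne)).symm (0, e₁)‖ ^ 2)
           (‖z - (WithLp.equiv 2 (ellOne × ellOne)).symm (0, -e₁)‖ ^ 2))
      ≤ 2 + a + b ∧ 2 + a + b ≤ 2 + Real.sqrt 2 := by
  set x := (WithLp.equiv 2 (ellOne × ellOne) z).1 with hxdef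
  set y := (WithLp.equiv 2 (ellOne × ellOne) z).2 with hydef
  have key1 : ‖z - (WithLp.equiv 2 (ellOne × ellOne)).symm (e₁, 0)‖ ^ 2
      = ‖x - e₁‖ ^ 2 + ‖y‖ ^ 2 := by
    rw [WithLp.prod_norm_sq_eq_of_L2, WithLp.sub_fst, WithLp.sub_snd]
    show ‖x - e₁‖ ^ 2 + ‖y - 0‖ ^ 2 = _
    rw [sub_zero]
  have key3 : ‖z - (WithLp.equiv 2 (ellOne × ellOne)).symm (0, e₁)‖ ^ 2
      = ‖x‖ ^ 2 + ‖y - e₁‖ ^ 2 := by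
    rw [WithLp.prod_norm_sq_eq_of_L2, WithLp.sub_fst, WithLp.sub_snd]
    show ‖x - 0‖ ^ 2 + ‖y - e₁‖ ^ 2 = _
    rw [sub_zero]
  have h1 : ‖z - (WithLp.equiv 2 (ellOne × ellOne)).symm (e₁, 0)‖ ^ 2 ≤ 2 + 2 * a := by
    rw [key1, hy]
    have h : ‖x - e₁‖ ≤ a + 1 := by
      calc ‖x - e₁‖ ≤ ‖x‖ + ‖e₁‖ := norm_sub_le _ _
      _ = a + 1 := by rw [hx, norm_e₁]
    have h2 : ‖x - e₁‖ ^ 2 ≤ (a + 1) ^ 2 :=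
      pow_le_pow_left₀ (norm_nonneg _) h 2
    nlinarith
  have h3 : ‖z - (WithLp.equiv 2 (ellOne × ellOne)).symm (0, e₁)‖ ^ 2 ≤ 2 + 2 * b := by
    rw [key3, hx]
    have h : ‖y - e₁‖ ≤ b + 1 := by
      calc ‖y - e₁‖ ≤ ‖y‖ + ‖e₁‖ := norm_sub_le _ _
      _ = b + 1 := by rw [hy, norm_e₁]
    have h2 : ‖y - e₁‖ ^ 2 ≤ (b + 1) ^ 2 :=
      pow_le_pow_left₀ (norm_nonneg _) h 2
    nlinarith
  constructor
  · rcases le_total a b with hle | hle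
    · refine le_trans (min_le_left _ _) (le_trans (min_le_left _ _) ?_)
      linarith
    · refine le_trans (min_le_right _ _) (le_trans (min_le_left _ _) ?_)
      linarith
  · have h2 : (a + b) ^ 2 ≤ 2 := by
      clear h1 h3 key1 key3 hx hy hxdef hydef
      nlinarith [sq_nonneg (a - b)]
    have : a + b ≤ Real.sqrt 2 := by
      have := Real.sqrt_le_sqrt h2
      rwa [Real.sqrt_sq (by linarith)] at this
    linarith
end

section
/- For 1 ≤ p < ∞ and any Banach space Y, the thickness constant of Z = ℓ_p ⊕_p Y equals 2^{1/p}. -/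
open scoped ENNReal NNReal

private lemma lp_sub_single_pow {p : ℝ≥0∞} (hpt : 0 < p.toReal)
    (a : lp (fun _ : ℕ => ℝ) p) (n : ℕ) (c : ℝ) :
    ‖a - lp.single p n c‖ ^ p.toReal
      = ‖a‖ ^ p.toReal - |a n| ^ p.toReal + |a n - c| ^ p.toReal := by
  set b : lp (fun _ : ℕ => ℝ) p := a - lp.single p n c with hb
  have h1 := lp.hasSum_norm hpt b
  have h2 := lp.hasSum_norm hpt a
  have h3 := h1.sub h2
  have h4 : HasSum
      (fun k => ‖(↑b : ∀ _ : ℕ, ℝ) k‖ ^ p.toReal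
        - ‖(↑a : ∀ _ : ℕ, ℝ) k‖ ^ p.toReal)
      (‖(↑b : ∀ _ : ℕ, ℝ) n‖ ^ p.toReal
        - ‖(↑a : ∀ _ : ℕ, ℝ) n‖ ^ p.toReal) := by
    apply hasSum_single n
    intro k hk
    have hcoe : (↑b : ∀ _ : ℕ, ℝ) k = (↑a : ∀ _ : ℕ, ℝ) k := by
      rw [hb, lp.coeFn_sub, Pi.sub_apply, lp.single_apply_ne (E := fun _ : ℕ => ℝ) p n c hk, sub_zero]
    rw [hcoe, sub_self]
  have h5 := h3.unique h4
  have h6 : (↑b : ∀ _ : ℕ, ℝ) n = (↑a : ∀ _ : ℕ, ℝ) n - c := by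
    rw [hb, lp.coeFn_sub, Pi.sub_apply, lp.single_apply_self (E := fun _ : ℕ => ℝ)]
  rw [h6] at h5
  simp only [Real.norm_eq_abs] at h5 ⊢
  linarith

private lemma prod_norm_pow {p : ℝ≥0∞} (hpt : 0 < p.toReal) {X B : Type*}
    [NormedAddCommGroup X] [NormedAddCommGroup B] (z : WithLp p (X × B)) :
    ‖z‖ ^ p.toReal = ‖z.fst‖ ^ p.toReal + ‖z.snd‖ ^ p.toReal := by
  rw [WithLp.prod_norm_eq_add hpt, one_div, Real.rpow_inv_rpow (by positivity) hpt.ne']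

set_option maxHeartbeats 1000000 in
/-- `T(ℓ_p ⊕_p Y) = 2^{1/p}` for `1 ≤ p < ∞` and any nonzero Banach space `Y`. -/
theorem thickness_lp_sum_p
    (p : ℝ≥0∞) [Fact (1 ≤ p)] (hp : p ≠ ⊤)
    (Y : Type*) [NormedAddCommGroup Y] [NormedSpace ℝ Y] [CompleteSpace Y] [Nontrivial Y] :
    thickness (WithLp p (lp (fun _ : ℕ => ℝ) p × Y)) = 2 ^ (1 / p.toReal) := by
  classical
  have hpt1 : 1 ≤ p.toReal := by
    have h1 : (1 : ℝ≥0∞) ≤ p := Fact.out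
    simpa using ENNReal.toReal_mono hp h1
  have hpt : 0 < p.toReal := lt_of_lt_of_le one_pos hpt1
  set A := lp (fun _ : ℕ => ℝ) p with hA
  set Z := WithLp p (A × Y) with hZdef
  -- the standard basis vectors of the ℓ_p part, as elements of Z
  set en : ℕ → Z := fun n => (WithLp.equiv p (A × Y)).symm (lp.single p n (1 : ℝ), 0)
    with hen
  have hen_fst : ∀ n, (en n).fst = lp.single p n (1 : ℝ) := fun n => rfl
  have hen_snd : ∀ n, (en n).snd = (0 : Y) := fun n => rfl
  have norm_en : ∀ n, ‖en n‖ = 1 := by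
    intro n
    have h : ‖en n‖ ^ p.toReal = 1 := by
      rw [prod_norm_pow hpt, hen_fst, hen_snd, norm_zero, Real.zero_rpow hpt.ne']
      have hs : ‖lp.single (E := fun _ : ℕ => ℝ) p n (1 : ℝ)‖ = 1 := by
        simpa using lp.norm_single (E := fun _ : ℕ => ℝ) (ENNReal.toReal_pos_iff.mp hpt).1 n (1:ℝ)
      rw [hs, Real.one_rpow]
      ring
    refine Real.rpow_left_injOn hpt.ne'
      (by exact norm_nonneg _ : ‖en n‖ ∈ {y : ℝ | 0 ≤ y})
      (by norm_num : (1:ℝ) ∈ {y : ℝ | 0 ≤ y}) ?_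
    show ‖en n‖ ^ p.toReal = (1:ℝ) ^ p.toReal
    rw [h, Real.one_rpow]
  -- the key distance computation: for x : Z and a single in the first coordinate
  have dist_pow : ∀ (x : Z) (n : ℕ) (c : ℝ),
      ‖x - (WithLp.equiv p (A × Y)).symm (lp.single p n c, 0)‖ ^ p.toReal
        = ‖x‖ ^ p.toReal - |x.fst n| ^ p.toReal + |x.fst n - c| ^ p.toReal := by
    intro x n c
    have h1 : (x - (WithLp.equiv p (A × Y)).symm (lp.single p n c, 0)).fst
        = x.fst - lp.single p n c := rfl
    have h2 : (x - (WithLp.equiv p (A × Y)).symm (lp.single p n c, 0)).snd = x.snd := by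
      show x.snd - 0 = x.snd
      rw [sub_zero]
    rw [prod_norm_pow hpt, h1, h2, lp_sub_single_pow hpt, prod_norm_pow hpt x]
    ring
  -- membership : 2^(1/p) belongs to the defining set
  have key_mem : (2 : ℝ) ^ (1 / p.toReal) ∈
      {ε : ℝ | 0 < ε ∧ ∃ F : Finset Z, (∀ x ∈ F, ‖x‖ = 1) ∧
        ∀ y : Z, ‖y‖ ≤ 1 → ∃ x ∈ F, ‖y - x‖ ≤ ε} := by
    refine ⟨Real.rpow_pos_of_pos two_pos _, {en 0, -en 0}, ?_, ?_⟩
    · intro x hx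
      rcases Finset.mem_insert.mp hx with h | h
      · rw [h]; exact norm_en 0
      · rw [Finset.mem_singleton.mp h, norm_neg]; exact norm_en 0
    · intro y hy
      set t := y.fst 0 with ht
      set s : ℝ := if 0 ≤ t then 1 else -1 with hs
      refine ⟨(WithLp.equiv p (A × Y)).symm (lp.single p 0 s, 0), ?_, ?_⟩
      · have hneg : (WithLp.equiv p (A × Y)).symm (lp.single p 0 (-1 : ℝ), (0:Y))
            = -en 0 := by
          have h : -en 0 = (WithLp.equiv p (A × Y)).symm
              (-(lp.single p 0 (1 : ℝ)), -(0:Y)) := rfl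
          rw [h, ← lp.single_neg, neg_zero]
        by_cases h : 0 ≤ t
        · rw [hs, if_pos h]
          exact Finset.mem_insert_self _ _
        · rw [hs, if_neg h, hneg]
          exact Finset.mem_insert_of_mem (Finset.mem_singleton_self _)
      · -- distance bound
        have habs : |t - s| ≤ 1 := by
          have hfst : ‖y.fst‖ ^ p.toReal ≤ ‖y‖ ^ p.toReal := by
            rw [prod_norm_pow hpt y]
            have h0 : (0:ℝ) ≤ ‖y.snd‖ ^ p.toReal := by positivity
            linarith
          have hfst' : ‖y.fst‖ ≤ 1 := by
            have h1 : ‖y‖ ^ p.toReal ≤ 1 :=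
              Real.rpow_le_one (norm_nonneg _) hy hpt.le
            have h2 := hfst.trans h1
            rw [show (1:ℝ) = 1 ^ p.toReal by rw [Real.one_rpow]] at h2
            exact (Real.rpow_le_rpow_iff (norm_nonneg _) one_pos.le hpt).mp h2
          have ht1 : |t| ≤ 1 :=
            le_trans (by simpa [Real.norm_eq_abs] using
              lp.norm_apply_le_norm (ne_of_gt (lt_of_lt_of_le zero_lt_one Fact.out)) y.fst 0) hfst'
          by_cases h : 0 ≤ t
          · rw [hs, if_pos h, abs_sub_comm, abs_of_nonneg (by
              have := (abs_le.mp ht1).2; linarith)]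
            have := (abs_le.mp ht1).1
            linarith
          · rw [hs, if_neg h]
            push_neg at h
            rw [sub_neg_eq_add, abs_of_nonneg (by
              have := (abs_le.mp ht1).1; linarith)]
            linarith
        have hpow : ‖y - (WithLp.equiv p (A × Y)).symm (lp.single p 0 s, 0)‖ ^ p.toReal
            ≤ 2 := by
          rw [dist_pow y 0 s]
          have h1 : ‖y‖ ^ p.toReal ≤ 1 := Real.rpow_le_one (norm_nonneg _) hy hpt.le
          have h2 : (0:ℝ) ≤ |y.fst 0| ^ p.toReal := by positivity
          have h3 : |y.fst 0 - s| ^ p.toReal ≤ 1 :=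
            Real.rpow_le_one (abs_nonneg _) (ht ▸ habs) hpt.le
          linarith
        calc ‖y - (WithLp.equiv p (A × Y)).symm (lp.single p 0 s, 0)‖
            = (‖y - (WithLp.equiv p (A × Y)).symm (lp.single p 0 s, 0)‖ ^ p.toReal)
                ^ (1 / p.toReal) := by
              rw [one_div, Real.rpow_rpow_inv (norm_nonneg _) hpt.ne']
          _ ≤ 2 ^ (1 / p.toReal) :=
              Real.rpow_le_rpow (by positivity) hpow (by positivity)
  -- lower bound : every element of the set is ≥ 2^(1/p)
  have key_lb : ∀ ε ∈ {ε : ℝ | 0 < ε ∧ ∃ F : Finset Z, (∀ x ∈ F, ‖x‖ = 1) ∧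
      ∀ y : Z, ‖y‖ ≤ 1 → ∃ x ∈ F, ‖y - x‖ ≤ ε}, (2 : ℝ) ^ (1 / p.toReal) ≤ ε := by
    rintro ε ⟨hε, F, hF1, hF2⟩
    by_contra hlt
    push_neg at hlt
    have hε2 : ε ^ p.toReal < 2 := by
      have h := Real.rpow_lt_rpow hε.le hlt hpt
      rwa [one_div, Real.rpow_inv_rpow (by norm_num) hpt.ne'] at h
    -- choose η small enough
    obtain ⟨η, hη0, hη1, hηkey⟩ : ∃ η : ℝ, 0 < η ∧ η ≤ 1 ∧
        ε ^ p.toReal < 1 - η ^ p.toReal + (1 - η) ^ p.toReal := by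
      have hcont : ContinuousAt
          (fun η : ℝ => 1 - η ^ p.toReal + (1 - η) ^ p.toReal) 0 := by
        apply ContinuousAt.add
        · exact continuousAt_const.sub
            (Real.continuousAt_rpow_const 0 _ (Or.inr hpt.le))
        · have hg : ContinuousAt (fun z : ℝ => z ^ p.toReal) ((fun η : ℝ => 1 - η) 0) := by
            simp only [sub_zero]
            exact Real.continuousAt_rpow_const 1 _ (Or.inl one_ne_zero)
          exact hg.comp (continuousAt_const.sub continuousAt_id)
      have h0 : (fun η : ℝ => 1 - η ^ p.toReal + (1 - η) ^ p.toReal) 0 = 2 := by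
        simp only [Real.zero_rpow hpt.ne', sub_zero, Real.one_rpow]
        norm_num
      have hev : ∀ᶠ η in nhds (0:ℝ),
          ε ^ p.toReal < 1 - η ^ p.toReal + (1 - η) ^ p.toReal :=
        hcont.eventually_const_lt (by rw [h0]; exact hε2)
      have hev2 : ∀ᶠ η in nhdsWithin (0:ℝ) (Set.Ioi 0),
          (ε ^ p.toReal < 1 - η ^ p.toReal + (1 - η) ^ p.toReal) ∧ η ≤ 1 := by
        apply Filter.Eventually.and
        · exact nhdsWithin_le_nhds hev
        · exact nhdsWithin_le_nhds (Filter.eventually_iff_exists_mem.mpr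
            ⟨Set.Iic 1, Iic_mem_nhds (by norm_num), fun x hx => hx⟩)
      obtain ⟨η, hη, hηpos⟩ := (hev2.and eventually_mem_nhdsWithin).exists
      exact ⟨η, hηpos, hη.2, hη.1⟩
    -- choose n with all |x.fst n| ≤ η
    obtain ⟨n, hn⟩ : ∃ n : ℕ, ∀ x ∈ F, |(↑x.fst : ∀ _ : ℕ, ℝ) n| ≤ η := by
      have hev : ∀ᶠ n in Filter.atTop, ∀ x ∈ F, |(↑x.fst : ∀ _ : ℕ, ℝ) n| ≤ η := by
        rw [Filter.eventually_all_finset]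
        intro x _
        have hsum : Summable (fun k => ‖(↑x.fst : ∀ _ : ℕ, ℝ) k‖ ^ p.toReal) :=
          (lp.hasSum_norm hpt x.fst).summable
        have htend := hsum.tendsto_atTop_zero
        have hlt2 : ∀ᶠ k in Filter.atTop,
            ‖(↑x.fst : ∀ _ : ℕ, ℝ) k‖ ^ p.toReal < η ^ p.toReal :=
          htend.eventually_lt_const (by positivity)
        filter_upwards [hlt2] with k hk
        have h : ‖(↑x.fst : ∀ _ : ℕ, ℝ) k‖ ≤ η := by
          by_contra hcon
          push_neg at hcon
          exact absurd (Real.rpow_le_rpow hη0.le hcon.le hpt.le) (not_le.mpr hk)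
        simpa [Real.norm_eq_abs] using h
      exact hev.exists
    -- contradiction with the covering property at en n
    obtain ⟨x, hxF, hxd⟩ := hF2 (en n) (le_of_eq (norm_en n))
    have hx1 : ‖x‖ = 1 := hF1 x hxF
    have hpow : ‖en n - x‖ ^ p.toReal
        = 1 - |(↑x.fst : ∀ _ : ℕ, ℝ) n| ^ p.toReal
          + |(↑x.fst : ∀ _ : ℕ, ℝ) n - 1| ^ p.toReal := by
      rw [norm_sub_rev, dist_pow x n 1, hx1, Real.one_rpow]
    have hb1 : |(↑x.fst : ∀ _ : ℕ, ℝ) n| ^ p.toReal ≤ η ^ p.toReal :=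
      Real.rpow_le_rpow (abs_nonneg _) (hn x hxF) hpt.le
    have hb2 : (1 - η) ^ p.toReal ≤ |(↑x.fst : ∀ _ : ℕ, ℝ) n - 1| ^ p.toReal := by
      apply Real.rpow_le_rpow (by linarith)
      · have h1 : |(1:ℝ)| - |(↑x.fst : ∀ _ : ℕ, ℝ) n| ≤ |1 - (↑x.fst : ∀ _ : ℕ, ℝ) n| :=
          abs_sub_abs_le_abs_sub 1 _
        rw [abs_one] at h1
        rw [abs_sub_comm]
        have := hn x hxF
        linarith
      · exact hpt.le
    have hge : ε ^ p.toReal < ‖en n - x‖ ^ p.toReal := by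
      rw [hpow]
      calc ε ^ p.toReal < 1 - η ^ p.toReal + (1 - η) ^ p.toReal := hηkey
        _ ≤ _ := by linarith
    have hle : ‖en n - x‖ ^ p.toReal ≤ ε ^ p.toReal :=
      Real.rpow_le_rpow (norm_nonneg _) hxd hpt.le
    linarith
  unfold thickness
  exact le_antisymm (csInf_le ⟨0, fun x hx => hx.1.le⟩ key_mem)
    (le_csInf ⟨_, key_mem⟩ key_lb)
end

section
/- For 1 ≤ p < ∞, the space X = ℝ ⊕_1 ℓ_p has thickness constant T(X) = 2^{1/p}, even though X is not uniformly nonsquare. -/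
open scoped ENNReal NNReal

private lemma key_superadd {x y q : ℝ} (hx : 0 ≤ x) (hy : 0 ≤ y) (hq : 1 ≤ q) :
    x ^ q + y ^ q ≤ (x + y) ^ q := by
  have h := (NNReal.coe_le_coe).mpr (NNReal.add_rpow_le_rpow_add x.toNNReal y.toNNReal hq)
  push_cast [Real.coe_toNNReal _ hx, Real.coe_toNNReal _ hy] at h
  exact h

private lemma rpow_le_rpow_rev {x y q : ℝ} (hx : 0 ≤ x) (hy : 0 ≤ y) (hq : 0 < q)
    (h : x ^ q ≤ y ^ q) : x ≤ y := by
  by_contra hc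
  push_neg at hc
  exact absurd h (not_le.mpr (Real.rpow_lt_rpow hy hc hq))

private lemma key_mean {s t q : ℝ} (hs : 0 ≤ s) (ht : 0 ≤ t) (hq : 1 ≤ q) :
    ((s + t) * 2 ^ (1 / q - 1)) ^ q ≤ s ^ q + t ^ q := by
  have hq0 : 0 < q := lt_of_lt_of_le one_pos hq
  have hmean : ((1:ℝ≥0)/2 * s.toNNReal + 1/2 * t.toNNReal) ^ q
      ≤ 1/2 * s.toNNReal ^ q + 1/2 * t.toNNReal ^ q :=
    NNReal.rpow_arith_mean_le_arith_mean2_rpow (1/2) (1/2) _ _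
      (by rw [← NNReal.coe_inj]; push_cast; norm_num) hq
  have hmean' : ((s + t)/2) ^ q ≤ (s ^ q + t ^ q)/2 := by
    have := (NNReal.coe_le_coe).mpr hmean
    push_cast [Real.coe_toNNReal _ hs, Real.coe_toNNReal _ ht] at this
    calc ((s+t)/2) ^ q = (1/2*s + 1/2*t) ^ q := by ring_nf
    _ ≤ 1/2*s^q + 1/2*t^q := this
    _ = (s^q + t^q)/2 := by ring
  have hst : 0 ≤ s + t := by linarith
  have h2 : ((2:ℝ) ^ (1/q - 1)) ^ q = 2 ^ (1 - q) := by
    rw [← Real.rpow_mul (by norm_num : (0:ℝ) ≤ 2)]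
    congr 1
    field_simp
  have hsplit : ((s + t) * 2 ^ (1/q - 1)) ^ q = (s + t) ^ q * 2 ^ (1 - q) := by
    rw [Real.mul_rpow hst (Real.rpow_nonneg (by norm_num) _), h2]
  have hdiv : ((s + t)/2) ^ q = (s + t) ^ q / 2 ^ q := by
    rw [Real.div_rpow hst (by norm_num : (0:ℝ) ≤ 2)]
  -- from hmean': (s+t)^q / 2^q ≤ (s^q+t^q)/2
  have h2q : (0:ℝ) < 2 ^ q := Real.rpow_pos_of_pos two_pos q
  have hkey : (s + t) ^ q ≤ 2 ^ q / 2 * (s ^ q + t ^ q) := by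
    rw [hdiv] at hmean'
    rw [div_le_div_iff₀ h2q (by norm_num : (0:ℝ) < 2)] at hmean'
    calc (s+t)^q ≤ (s^q + t^q) * 2^q / 2 := by linarith
    _ = 2^q/2 * (s^q + t^q) := by ring
  rw [hsplit]
  have h1q : (2:ℝ) ^ (1 - q) = 2 / 2 ^ q := by
    rw [Real.rpow_sub two_pos, Real.rpow_one]
  calc (s + t) ^ q * 2 ^ (1 - q) ≤ (2 ^ q / 2 * (s ^ q + t ^ q)) * 2 ^ (1 - q) := by
        apply mul_le_mul_of_nonneg_right hkey (Real.rpow_nonneg (by norm_num) _)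
    _ = s ^ q + t ^ q := by rw [h1q]; field_simp

private lemma lp_single_sub (p : ℝ≥0∞) (n : ℕ) (a b : ℝ) :
    lp.single p n (a - b) = (lp.single p n a : lp (fun _ : ℕ => ℝ) p) - lp.single p n b := by
  apply lp.ext
  funext j
  by_cases h : j = n
  · subst h
    simp [lp.coeFn_sub, lp.single_apply_self]
  · simp [lp.coeFn_sub, lp.single_apply_ne p n _ h]

private lemma lp_split (p : ℝ≥0∞) [Fact (1 ≤ p)] (hq0 : 0 < p.toReal)
    (w : lp (fun _ : ℕ => ℝ) p) (n : ℕ) (c : ℝ) :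
    ‖lp.single p n c - w‖ ^ p.toReal
      = |c - w n| ^ p.toReal + (‖w‖ ^ p.toReal - |w n| ^ p.toReal) := by
  have h1 := lp.norm_sub_norm_compl_sub_single hq0 (lp.single p n c - w) ({n} : Finset ℕ)
  have h2 := lp.norm_sub_norm_compl_sub_single hq0 w ({n} : Finset ℕ)
  simp only [Finset.sum_singleton] at h1 h2
  simp only [lp.coeFn_sub, Pi.sub_apply, lp.single_apply_self] at h1
  have hkey : (lp.single p n c - w) - lp.single p n (c - w n)
      = -(w - lp.single p n (w n)) := by
    rw [lp_single_sub]
    abel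
  rw [hkey, norm_neg] at h1
  simp only [Real.norm_eq_abs] at h1 h2
  linarith

private lemma one_norm {E F : Type*} [NormedAddCommGroup E] [NormedAddCommGroup F]
    (z : WithLp 1 (E × F)) : ‖z‖ = ‖z.fst‖ + ‖z.snd‖ := by
  rw [WithLp.prod_norm_eq_add (by norm_num)]
  norm_num

private lemma wlp_sub_fst {E F : Type*} [NormedAddCommGroup E] [NormedAddCommGroup F]
    (x y : WithLp 1 (E × F)) : (x - y).fst = x.fst - y.fst := rfl

private lemma wlp_sub_snd {E F : Type*} [NormedAddCommGroup E] [NormedAddCommGroup F]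
    (x y : WithLp 1 (E × F)) : (x - y).snd = x.snd - y.snd := rfl

set_option maxHeartbeats 1000000 in
/-- `T(ℝ ⊕_1 ℓ_p) = 2^{1/p}` for `1 ≤ p < ∞`, even though this space is not
uniformly nonsquare. -/
theorem thickness_real_sum1_lp
    (p : ℝ≥0∞) [Fact (1 ≤ p)] (hp : p ≠ ⊤) :
    thickness (WithLp 1 (ℝ × lp (fun _ : ℕ => ℝ) p)) = 2 ^ (1 / p.toReal) ∧
    ∀ δ : ℝ, δ < 2 → ∃ x y : WithLp 1 (ℝ × lp (fun _ : ℕ => ℝ) p),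
      ‖x‖ = 1 ∧ ‖y‖ = 1 ∧ δ < min ‖x - y‖ ‖x + y‖ := by
  have hfact : (1:ℝ≥0∞) ≤ p := Fact.out
  have hq1 : 1 ≤ p.toReal := by
    rw [← ENNReal.toReal_one]; exact ENNReal.toReal_mono hp hfact
  have hq0 : 0 < p.toReal := lt_of_lt_of_le one_pos hq1
  set q := p.toReal with hqdef
  have hc2pos : 0 < (2:ℝ) ^ (1/q - 1) := Real.rpow_pos_of_pos two_pos _
  have hc2le1 : (2:ℝ) ^ (1/q - 1) ≤ 1 := by
    apply Real.rpow_le_one_of_one_le_of_nonpos one_le_two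
    have : 1/q ≤ 1 := by rw [div_le_one hq0]; exact hq1
    linarith
  have hT2 : (2:ℝ) ^ (1/q) = 2 * 2 ^ (1/q - 1) := by
    have h : (2:ℝ)^(1/q) = 2^((1:ℝ)+(1/q-1)) := by ring_nf
    rw [h, Real.rpow_add two_pos, Real.rpow_one]
  have hTpos : 0 < (2:ℝ)^(1/q) := Real.rpow_pos_of_pos two_pos _
  have hTq : ((2:ℝ)^(1/q))^q = 2 := by
    rw [← Real.rpow_mul (by norm_num), one_div_mul_cancel hq0.ne', Real.rpow_one]
  have hnorm1 : ∀ (n : ℕ) (v : ℝ),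
      ‖(lp.single p n v : lp (fun _ : ℕ => ℝ) p)‖ = |v| := fun n v => by
    simpa using lp.norm_single (E := fun _ : ℕ => ℝ) (lt_of_lt_of_le zero_lt_one hfact) n v
  have hp0 : p ≠ 0 := (lt_of_lt_of_le zero_lt_one hfact).ne'
  classical
  have hup : ∀ ε : ℝ, (2:ℝ)^(1/q) < ε →
      (0 < ε ∧ ∃ F : Finset (WithLp 1 (ℝ × lp (fun _ : ℕ => ℝ) p)),
        (∀ x ∈ F, ‖x‖ = 1) ∧
        ∀ y : WithLp 1 (ℝ × lp (fun _ : ℕ => ℝ) p), ‖y‖ ≤ 1 → ∃ x ∈ F, ‖y - x‖ ≤ ε) := by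
    intro ε hε
    refine ⟨lt_trans hTpos hε, ?_⟩
    obtain ⟨m, hm⟩ := exists_nat_one_div_lt (show (0:ℝ) < ε - 2^(1/q) by linarith)
    set M : ℕ := m + 1 with hMdef
    have hMpos : (0:ℝ) < M := by positivity
    have hMlt : 1 / (M:ℝ) ≤ ε - 2^(1/q) := by
      rw [hMdef]
      push_cast
      exact hm.le
    set ctr : ℤ × Bool → WithLp 1 (ℝ × lp (fun _ : ℕ => ℝ) p) := fun ib =>
      (WithLp.equiv 1 _).symm ((ib.1 : ℝ)/M,
        lp.single p 0 ((if ib.2 then 1 else -1) * (1 - |(ib.1:ℝ)/M|))) with hctr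
    refine ⟨Finset.image ctr ((Finset.Icc (-(M:ℤ)) M) ×ˢ Finset.univ), ?_, ?_⟩
    · intro x hx
      obtain ⟨ib, hib, rfl⟩ := Finset.mem_image.mp hx
      have hib1 := (Finset.mem_product.mp hib).1
      rw [Finset.mem_Icc] at hib1
      have habs : |(ib.1:ℝ)/M| ≤ 1 := by
        rw [abs_div, abs_of_pos hMpos, div_le_one hMpos]
        have : |ib.1| ≤ (M:ℤ) := abs_le.mpr hib1
        exact_mod_cast this
      rw [hctr, one_norm]
      simp only [WithLp.equiv_symm_apply, WithLp.toLp_fst, WithLp.toLp_snd, hnorm1, Real.norm_eq_abs]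
      rw [abs_mul]
      have hsgn : |(if ib.2 then (1:ℝ) else -1)| = 1 := by rcases ib.2 <;> simp
      rw [hsgn, one_mul, abs_of_nonneg (by linarith : (0:ℝ) ≤ 1 - |(ib.1:ℝ)/M|)]
      ring
    · intro y hy
      rw [one_norm, Real.norm_eq_abs] at hy
      set c := y.fst with hcdef
      set x := y.snd with hxdef
      have hc1 : |c| ≤ 1 := by linarith [norm_nonneg x]
      set k : ℤ := ⌊|c| * M⌋ with hk
      have hk0 : 0 ≤ k := Int.floor_nonneg.mpr (by positivity)
      have hkM : k ≤ (M:ℤ) := by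
        have h1 : |c| * M ≤ (M:ℝ) := by nlinarith [abs_nonneg c]
        calc k ≤ ⌊(M:ℝ)⌋ := Int.floor_mono h1
          _ = (M:ℤ) := Int.floor_natCast M
      have hkle : (k:ℝ) ≤ |c| * M := Int.floor_le _
      have hkgt : |c| * M < k + 1 := Int.lt_floor_add_one _
      set i0 : ℤ := if 0 ≤ c then k else -k with hi0
      set s : Bool := decide (0 ≤ x 0) with hs
      set a : ℝ := (i0:ℝ)/M with ha
      have hai : |a| = (k:ℝ)/M := by
        rw [ha, abs_div, abs_of_pos hMpos]
        congr 1
        rw [hi0]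
        split
        · exact abs_of_nonneg (by exact_mod_cast hk0)
        · push_cast
          rw [abs_neg]
          exact abs_of_nonneg (by exact_mod_cast hk0)
      have hac : |a| ≤ |c| := by
        rw [hai, div_le_iff₀ hMpos]
        exact hkle
      have hca : |c - a| ≤ 1/M := by
        rcases le_or_gt 0 c with hc0 | hc0
        · have ha' : a = (k:ℝ)/M := by rw [ha, hi0, if_pos hc0]
          have h1 : a ≤ c := by
            rw [ha', div_le_iff₀ hMpos, ← abs_of_nonneg hc0]
            exact hkle
          have h2 : c - a ≤ 1/M := by
            rw [ha', sub_le_iff_le_add, ← add_div, le_div_iff₀ hMpos]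
            have : c * M < k + 1 := by rw [← abs_of_nonneg hc0]; exact hkgt
            linarith
          rw [abs_of_nonneg (by linarith)]
          exact h2
        · have ha' : a = -((k:ℝ)/M) := by
            rw [ha, hi0, if_neg (not_le.mpr hc0)]
            push_cast
            ring
          have h1 : c ≤ a := by
            rw [ha']
            have hkc : (k:ℝ)/M ≤ -c := by
              rw [div_le_iff₀ hMpos]
              calc (k:ℝ) ≤ |c| * M := hkle
                _ = -c * M := by rw [abs_of_neg hc0]
            linarith
          have h2 : a - c ≤ 1/M := by
            rw [ha']
            have h3 : |c| ≤ ((k:ℝ)+1)/M := by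
              rw [le_div_iff₀ hMpos]
              linarith
            have h4 : ((k:ℝ)+1)/M - (k:ℝ)/M = 1/M := by
              rw [div_sub_div_same]
              norm_num
            linarith [abs_of_neg hc0]
          rw [abs_of_nonpos (by linarith)]
          linarith
      have hat : |a| ≤ 1 := hac.trans hc1
      have hmem : (i0, s) ∈ (Finset.Icc (-(M:ℤ)) M) ×ˢ (Finset.univ : Finset Bool) := by
        refine Finset.mem_product.mpr ⟨Finset.mem_Icc.mpr ?_, Finset.mem_univ _⟩
        constructor <;> (rw [hi0]; split <;> omega)
      refine ⟨ctr (i0, s), Finset.mem_image_of_mem _ hmem, ?_⟩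
      have hdist : ‖y - ctr (i0, s)‖
          = |c - a| + ‖x - lp.single p 0 ((if s then (1:ℝ) else -1) * (1 - |a|))‖ := by
        rw [one_norm, wlp_sub_fst, wlp_sub_snd, hctr]
        simp [Real.norm_eq_abs, ← ha, ← hcdef, ← hxdef]
      set t : ℝ := 1 - |a| with ht
      set v : ℝ := (if s then (1:ℝ) else -1) * t with hv
      have hsplit := lp_split p hq0 x 0 v
      have hux : |x 0| ≤ ‖x‖ := by
        simpa [Real.norm_eq_abs] using lp.norm_apply_le_norm hp0 x 0
      have hr : ‖x‖ ≤ t := by rw [ht]; linarith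
      have hxt : |x 0| ≤ t := hux.trans hr
      have hvx : |v - x 0| = t - |x 0| := by
        rw [hv, hs]
        rcases le_or_gt 0 (x 0) with h0 | h0
        · rw [if_pos (by simpa using h0), one_mul, abs_of_nonneg h0,
            abs_of_nonneg (by linarith [le_abs_self (x 0)])]
        · rw [if_neg (by simpa using not_le.mpr h0), neg_one_mul, abs_of_neg h0]
          rw [abs_of_nonpos (by linarith [neg_abs_le (x 0)])]
          ring
      have ht1 : t ≤ 1 := by rw [ht]; linarith [abs_nonneg a]
      have hb2 : ‖lp.single p 0 v - x‖ ^ q ≤ 2 := by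
        rw [hsplit, hvx]
        have e1 : (t - |x 0|) ^ q ≤ 1 :=
          Real.rpow_le_one (by linarith) (by linarith [abs_nonneg (x 0)]) hq0.le
        have e2 : ‖x‖ ^ q ≤ 1 := Real.rpow_le_one (norm_nonneg _) (by linarith) hq0.le
        have e3 : 0 ≤ |x 0| ^ q := Real.rpow_nonneg (abs_nonneg _) _
        linarith
      have hb3 : ‖x - lp.single p 0 v‖ ≤ 2 ^ (1/q) := by
        rw [norm_sub_rev]
        refine rpow_le_rpow_rev (norm_nonneg _) hTpos.le hq0 ?_
        rw [hTq]
        exact hb2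
      rw [hdist]
      linarith
  have hlow : ∀ ε : ℝ, (0 < ε ∧ ∃ F : Finset (WithLp 1 (ℝ × lp (fun _ : ℕ => ℝ) p)),
        (∀ x ∈ F, ‖x‖ = 1) ∧
        ∀ y : WithLp 1 (ℝ × lp (fun _ : ℕ => ℝ) p), ‖y‖ ≤ 1 → ∃ x ∈ F, ‖y - x‖ ≤ ε) →
      (2:ℝ)^(1/q) ≤ ε := by
    rintro ε ⟨hε, F, hF1, hF2⟩
    refine le_of_forall_pos_le_add fun δ hδ => ?_
    set η := min (δ/2) (1/2) with hηdef
    have hη0 : 0 < η := lt_min (by linarith) (by norm_num)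
    have hη2 : η ≤ 1/2 := min_le_right _ _
    have hηδ : 2*η ≤ δ := by
      have h := min_le_left (δ/2) (1/2)
      rw [← hηdef] at h
      linarith
    have htail : ∀ z ∈ F, ∀ᶠ n in Filter.atTop, |z.snd n| ≤ η := by
      intro z _
      have hsum : Summable (fun n => ‖z.snd n‖ ^ q) := (lp.memℓp z.snd).summable hq0
      have hev : ∀ᶠ n in Filter.atTop, ‖z.snd n‖ ^ q < η ^ q :=
        hsum.tendsto_atTop_zero.eventually_lt_const (Real.rpow_pos_of_pos hη0 q)
      refine hev.mono fun n hn => ?_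
      rw [Real.norm_eq_abs] at hn
      by_contra hc
      push_neg at hc
      have := Real.rpow_le_rpow hη0.le hc.le hq0.le
      linarith
    have hall : ∀ᶠ n in Filter.atTop, ∀ z ∈ F, |z.snd n| ≤ η :=
      (Filter.eventually_all_finset F).mpr htail
    obtain ⟨n, hn⟩ := hall.exists
    set y : WithLp 1 (ℝ × lp (fun _ : ℕ => ℝ) p) :=
      (WithLp.equiv 1 _).symm (0, lp.single p n 1) with hydef
    have hynorm : ‖y‖ ≤ 1 := by
      rw [hydef, one_norm]
      simp [hnorm1]
    obtain ⟨z, hzF, hdist⟩ := hF2 y hynorm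
    have hz1 : |z.fst| + ‖z.snd‖ = 1 := by
      have h := hF1 z hzF
      rw [one_norm] at h
      simpa [Real.norm_eq_abs] using h
    have hyz : ‖y - z‖ = |z.fst| + ‖lp.single p n 1 - z.snd‖ := by
      rw [one_norm, wlp_sub_fst, wlp_sub_snd, hydef]
      simp [Real.norm_eq_abs]
    set w := z.snd with hwdef
    set a := z.fst with hadef
    have hu : |w n| ≤ η := hn z hzF
    have hub : |w n| ≤ ‖w‖ := by
      have hp0 : p ≠ 0 := (lt_of_lt_of_le zero_lt_one hfact).ne'
      simpa [Real.norm_eq_abs] using lp.norm_apply_le_norm hp0 w n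
    have hsplit := lp_split p hq0 w n 1
    set b := ‖w‖ with hbdef
    have hb0 : 0 ≤ b := norm_nonneg _
    have h1 : (1-η)^q ≤ |1 - w n|^q := by
      apply Real.rpow_le_rpow (by linarith) ?_ hq0.le
      have hwn : w n ≤ η := (le_abs_self _).trans hu
      have h1' : 1 - η ≤ 1 - w n := by linarith
      exact h1'.trans (le_abs_self _)
    have h2 : max (b - η) 0 ^ q ≤ b^q - |w n|^q := by
      rcases le_or_gt (b - η) 0 with hbe | hbe
      · rw [max_eq_right hbe, Real.zero_rpow hq0.ne']
        have := Real.rpow_le_rpow (abs_nonneg _) hub hq0.le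
        linarith
      · rw [max_eq_left hbe.le]
        have hkey := key_superadd (x := b - η) (y := |w n|) (by linarith) (abs_nonneg _) hq1
        have h3 : (b - η + |w n|) ^ q ≤ b ^ q :=
          Real.rpow_le_rpow (by positivity) (by linarith) hq0.le
        linarith
    have hmean := key_mean (s := 1-η) (t := max (b - η) 0) (by linarith) (le_max_right _ _) hq1
    have hlowq : (((1-η) + max (b - η) 0) * 2^(1/q-1))^q ≤ ‖lp.single p n 1 - w‖^q := by
      rw [hsplit]
      linarith
    have hle : ((1-η) + max (b - η) 0) * 2^(1/q-1) ≤ ‖lp.single p n 1 - w‖ := by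
      refine rpow_le_rpow_rev ?_ (norm_nonneg _) hq0 hlowq
      have : (0:ℝ) ≤ (1-η) + max (b - η) 0 := by
        have := le_max_right (b - η) (0:ℝ)
        linarith
      exact mul_nonneg this hc2pos.le
    have h4 : 1 + b - 2*η ≤ (1-η) + max (b - η) 0 := by
      rcases le_or_gt (b - η) 0 with hbe | hbe
      · rw [max_eq_right hbe]
        linarith
      · rw [max_eq_left hbe.le]
        linarith
    have h5 : (1 + b - 2*η) * 2^(1/q-1) ≤ ((1-η) + max (b - η) 0) * 2^(1/q-1) :=
      mul_le_mul_of_nonneg_right h4 hc2pos.le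
    have hfinal : |a| + (1 + b - 2*η) * 2^(1/q-1) ≤ ε := by
      calc |a| + (1 + b - 2*η) * 2^(1/q-1) ≤ |a| + ‖lp.single p n 1 - w‖ := by linarith
      _ = ‖y - z‖ := hyz.symm
      _ ≤ ε := hdist
    have hb : b = 1 - |a| := by linarith [hz1]
    rw [hT2]
    nlinarith [mul_nonneg (abs_nonneg a) (sub_nonneg.mpr hc2le1),
      mul_le_mul_of_nonneg_left hc2le1 hη0.le, abs_nonneg a, hfinal, hb, hηδ]
  constructor
  · rw [thickness]
    apply le_antisymm
    · refine le_of_forall_pos_le_add fun δ hδ => ?_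
      exact csInf_le ⟨0, fun ε hε => hε.1.le⟩ (hup _ (by linarith))
    · exact le_csInf ⟨(2:ℝ)^(1/q) + 1, hup _ (by linarith)⟩ hlow
  · intro δ hδ
    refine ⟨(WithLp.equiv 1 _).symm (1, 0), (WithLp.equiv 1 _).symm (0, lp.single p 0 1),
      ?_, ?_, ?_⟩
    · rw [one_norm]
      simp [hnorm1]
    · rw [one_norm]
      simp [hnorm1]
    · rw [WithLp.equiv_symm_apply, ← WithLp.toLp_sub, ← WithLp.toLp_add]
      have h1 : ((1:ℝ), (0 : lp (fun _ : ℕ => ℝ) p)) - (0, lp.single p 0 1)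
          = (1, -lp.single p 0 1) := by simp [Prod.ext_iff]
      have h2 : ((1:ℝ), (0 : lp (fun _ : ℕ => ℝ) p)) + (0, lp.single p 0 1)
          = (1, lp.single p 0 1) := by simp [Prod.ext_iff]
      rw [h1, h2]
      have e1 : ‖(WithLp.equiv 1 (ℝ × lp (fun _ : ℕ => ℝ) p)).symm (1, -lp.single p 0 1)‖ = 2 := by
        rw [one_norm]
        simp [hnorm1]
        norm_num
      have e2 : ‖(WithLp.equiv 1 (ℝ × lp (fun _ : ℕ => ℝ) p)).symm (1, lp.single p 0 1)‖ = 2 := by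
        rw [one_norm]
        simp [hnorm1]
        norm_num
      rw [WithLp.equiv_symm_apply] at e1 e2
      rw [e1, e2]
      simpa using hδ
end
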